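/- arXiv:1607.05892 — 4 statements merged into one kernel-verified Lean document; each statement's English description precedes it below -/
import Mathlib

section
/- Let S be a thick generalized quadrangle and S' a thick full subquadrangle of S that is a geometrical hyperplane of S, with A, E and the canonical projection π : A → E as defined. For distinct points u and v of A: π(u) = π(v) (i.e., the subtended ovoids O_u and O_v coincide) if and only if no point of A is collinear in S with both u and v. -/
namespace GQpaper

variable {P L : Type}

/-- Two points of a point-line geometry are collinear: they are equal or lie on a
common line. -/
def Collinear (I : P → L → Prop) (x y : P) : Prop :=
  x = y ∨ ∃ l : L, I x l ∧ I y l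

/-- Generalized quadrangle axioms: two distinct points are on at most one common line,
and for every non-incident point-line pair `(x, l)` there is a unique pair `(y, M)`
with `x I M`, `y I M`, `y I l`. -/
def IsGQ (I : P → L → Prop) : Prop :=
  (∀ x y : P, x ≠ y → ∀ M N : L, I x M → I y M → I x N → I y N → M = N) ∧
  (∀ (x : P) (l : L), ¬ I x l → ∃! p : P × L, I x p.2 ∧ I p.1 p.2 ∧ I p.1 l)

/-- Thick: every line has at least 3 points and every point is on at least 3 lines. -/
def Thick (I : P → L → Prop) : Prop :=
  (∀ l : L, ∃ x y z : P, x ≠ y ∧ y ≠ z ∧ x ≠ z ∧ I x l ∧ I y l ∧ I z l) ∧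
  (∀ x : P, ∃ l m n : L, l ≠ m ∧ m ≠ n ∧ l ≠ n ∧ I x l ∧ I x m ∧ I x n)

/-- The induced incidence relation on a subgeometry `(P', L')`. -/
def SubIncid (I : P → L → Prop) (P' : Set P) (L' : Set L) : ↥P' → ↥L' → Prop :=
  fun x l => I x.1 l.1

/-- A subgeometry is full if every point of the ambient geometry incident with one of
its lines belongs to it. -/
def IsFull (I : P → L → Prop) (P' : Set P) (L' : Set L) : Prop :=
  ∀ l ∈ L', ∀ x : P, I x l → x ∈ P'

/-- A geometrical hyperplane: each of its lines contains at least 2 of its points, and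
every line of the ambient geometry either is a line of the subgeometry all of whose
points lie in the subgeometry, or contains exactly one point of the subgeometry. -/
def IsGeomHyperplane (I : P → L → Prop) (P' : Set P) (L' : Set L) : Prop :=
  (∀ l ∈ L', ∃ x y : P, x ≠ y ∧ x ∈ P' ∧ y ∈ P' ∧ I x l ∧ I y l) ∧
  (∀ l : L, (l ∈ L' ∧ ∀ x : P, I x l → x ∈ P') ∨ (l ∉ L' ∧ ∃! x : P, I x l ∧ x ∈ P'))

/-- An ovoid of the subquadrangle `(P', L')`: a set of its points meeting every one of
its lines in exactly one point. -/
def IsOvoid (I : P → L → Prop) (P' : Set P) (L' : Set L) (O : Set P) : Prop :=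
  O ⊆ P' ∧ ∀ l ∈ L', ∃! x : P, x ∈ O ∧ I x l

/-- The ovoid of `S'` subtended by an external point `x`: the points of `P'` collinear
with `x`. -/
def subtendedOvoid (I : P → L → Prop) (P' : Set P) (x : P) : Set P :=
  {y : P | y ∈ P' ∧ Collinear I x y}

/-- The rosette of ovoids determined by a line `l` (not in the subquadrangle): the set
of the ovoids subtended by the external points of `l`. -/
def rosette (I : P → L → Prop) (P' : Set P) (l : L) : Set (Set P) :=
  {O : Set P | ∃ x : P, x ∉ P' ∧ I x l ∧ O = subtendedOvoid I P' x}

/-- Points of the geometry `A = S \ S'`. -/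
abbrev APoint (P' : Set P) : Type := {x : P // x ∉ P'}

/-- Lines of the geometry `A = S \ S'`. -/
abbrev ALine (L' : Set L) : Type := {l : L // l ∉ L'}

/-- Incidence in the geometry `A`. -/
def AIncid (I : P → L → Prop) (P' : Set P) (L' : Set L) :
    APoint P' → ALine L' → Prop :=
  fun x l => I x.1 l.1

/-- Points of the geometry `E`: the subtended ovoids of `S'`. -/
abbrev EPoint (I : P → L → Prop) (P' : Set P) : Type :=
  {O : Set P // ∃ x : P, x ∉ P' ∧ O = subtendedOvoid I P' x}

/-- Lines of the geometry `E`: the rosettes of subtended ovoids of `S'`. -/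
abbrev ELine (I : P → L → Prop) (P' : Set P) (L' : Set L) : Type :=
  {R : Set (Set P) // ∃ l : L, l ∉ L' ∧ R = rosette I P' l}

/-- Incidence in `E`: membership of an ovoid in a rosette. -/
def EIncid (I : P → L → Prop) (P' : Set P) (L' : Set L) :
    EPoint I P' → ELine I P' L' → Prop :=
  fun O R => O.1 ∈ R.1

/-- The canonical projection `π : A → E` on points. -/
def piPoint (I : P → L → Prop) (P' : Set P) : APoint P' → EPoint I P' :=
  fun x => ⟨subtendedOvoid I P' x.1, x.1, x.2, rfl⟩

/-- The canonical projection `π : A → E` on lines. -/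
def piLine (I : P → L → Prop) (P' : Set P) (L' : Set L) : ALine L' → ELine I P' L' :=
  fun l => ⟨rosette I P' l.1, l.1, l.2, rfl⟩

/-- A morphism of point-line geometries: preserves incidence. -/
def IsMorphism {P₁ L₁ P₂ L₂ : Type} (I₁ : P₁ → L₁ → Prop) (I₂ : P₂ → L₂ → Prop)
    (fp : P₁ → P₂) (fl : L₁ → L₂) : Prop :=
  ∀ x l, I₁ x l → I₂ (fp x) (fl l)

/-- A cover: a morphism which is locally bijective, i.e. for every point `x` it induces
a bijection between the lines through `x` and the lines through `fp x`, and dually. -/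
def IsCover {P₁ L₁ P₂ L₂ : Type} (I₁ : P₁ → L₁ → Prop) (I₂ : P₂ → L₂ → Prop)
    (fp : P₁ → P₂) (fl : L₁ → L₂) : Prop :=
  IsMorphism I₁ I₂ fp fl ∧
  (∀ (x : P₁) (m : L₂), I₂ (fp x) m → ∃! l : L₁, I₁ x l ∧ fl l = m) ∧
  (∀ (l : L₁) (y : P₂), I₂ y (fl l) → ∃! x : P₁, I₁ x l ∧ fp x = y)

/-- An isomorphism of point-line geometries: a bijective morphism whose inverse is a
morphism, equivalently a pair of bijections under which incidence corresponds. -/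
def IsIso {P₁ L₁ P₂ L₂ : Type} (I₁ : P₁ → L₁ → Prop) (I₂ : P₂ → L₂ → Prop)
    (fp : P₁ → P₂) (fl : L₁ → L₂) : Prop :=
  Function.Bijective fp ∧ Function.Bijective fl ∧
  ∀ (x : P₁) (l : L₁), I₁ x l ↔ I₂ (fp x) (fl l)

/-- An automorphism of a point-line geometry. -/
def IsAuto (I : P → L → Prop) (fp : P → P) (fl : L → L) : Prop :=
  IsIso I I fp fl

/-- A finite GQ has order `(s, t)` if every line carries `s + 1` points and every point
carries `t + 1` lines. -/
def HasOrder (I : P → L → Prop) (s t : ℕ) : Prop :=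
  (∀ l : L, {x : P | I x l}.ncard = s + 1) ∧
  (∀ x : P, {l : L | I x l}.ncard = t + 1)

/-- Every subtended ovoid of `S'` is subtended by exactly `θ` external points. -/
def AllThetaSubtended (I : P → L → Prop) (P' : Set P) (θ : ℕ) : Prop :=
  ∀ x : P, x ∉ P' →
    {y : P | y ∉ P' ∧ subtendedOvoid I P' y = subtendedOvoid I P' x}.ncard = θ

/-- The perp of a set of points: all points collinear with every point of the set. -/
def perpSet (I : P → L → Prop) (X : Set P) : Set P :=
  {z : P | ∀ y ∈ X, Collinear I z y}

/-- The action of a permutation of the points of `S'` on subsets of `P'`. -/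
def ovMap (P' : Set P) (f : ↥P' → ↥P') (O : Set P) : Set P :=
  {z : P | ∃ y : ↥P', y.1 ∈ O ∧ (f y).1 = z}


/-- Any line through an external point is external and meets `P'` in a unique point. -/
lemma extLine {I : P → L → Prop} {P' : Set P} {L' : Set L}
    (hHyp : IsGeomHyperplane I P' L') {x : P} {m : L}
    (hx : x ∉ P') (hxm : I x m) : m ∉ L' ∧ ∃! p : P, I p m ∧ p ∈ P' := by
  rcases hHyp.2 m with ⟨hm, hall⟩ | h
  · exact absurd (hall x hxm) hx
  · exact h

/-- Given an external point `u` and a point `p ∈ P'`, there is a point `q ∈ P'`,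
`q ≠ p`, collinear with `u` via some line. -/
lemma existsSecond {I : P → L → Prop} {P' : Set P} {L' : Set L}
    (hGQ : IsGQ I) (hSubThick : Thick (SubIncid I P' L'))
    (hFull : IsFull I P' L')
    {u p : P} (hu : u ∉ P') (hp : p ∈ P') :
    ∃ q : P, q ∈ P' ∧ q ≠ p ∧ ∃ m : L, I u m ∧ I q m := by
  obtain ⟨l₁, l₂', l₃', -, -, -, hpl₁, -, -⟩ := hSubThick.2 ⟨p, hp⟩
  obtain ⟨x, y, z, hxy, -, -, hxl, hyl, -⟩ := hSubThick.1 l₁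
  -- pick r on l₁ with r ≠ p
  have hr : ∃ r : ↥P', SubIncid I P' L' r l₁ ∧ r ≠ ⟨p, hp⟩ := by
    by_cases hx' : x = ⟨p, hp⟩
    · exact ⟨y, hyl, fun h => hxy (hx'.trans h.symm)⟩
    · exact ⟨x, hxl, hx'⟩
  obtain ⟨r, hrl, hrp⟩ := hr
  obtain ⟨m₁, m₂, m₃, hm12, hm23, hm13, hrm₁, hrm₂, hrm₃⟩ := hSubThick.2 r
  have hm : ∃ m : ↥L', SubIncid I P' L' r m ∧ m ≠ l₁ := by
    by_cases h1 : m₁ = l₁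
    · exact ⟨m₂, hrm₂, fun h => hm12 (h1.trans h.symm)⟩
    · exact ⟨m₁, hrm₁, h1⟩
  obtain ⟨m, hrm, hml⟩ := hm
  have hrp' : r.1 ≠ p := fun h => hrp (Subtype.ext h)
  have hpnm : ¬ I p m.1 := by
    intro hpm
    exact hml (Subtype.ext (hGQ.1 r.1 p hrp' m.1 l₁.1 hrm hpm hrl hpl₁))
  have hunm : ¬ I u m.1 := fun h => hu (hFull m.1 m.2 u h)
  obtain ⟨⟨q, M⟩, ⟨huM, hqM, hqm⟩, -⟩ := hGQ.2 u m.1 hunm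
  refine ⟨q, hFull m.1 m.2 q hqm, fun h => hpnm (h ▸ hqm), M, huM, hqM⟩

/-- If two distinct external points lie on a common line, their subtended ovoids
differ. -/
lemma adjacent_ne {I : P → L → Prop} {P' : Set P} {L' : Set L}
    (hGQ : IsGQ I) (hSubThick : Thick (SubIncid I P' L'))
    (hFull : IsFull I P' L') (hHyp : IsGeomHyperplane I P' L')
    {u v : P} {l : L} (hu : u ∉ P') (hv : v ∉ P') (huv : u ≠ v)
    (hul : I u l) (hvl : I v l)
    (hO : subtendedOvoid I P' u = subtendedOvoid I P' v) : False := by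
  obtain ⟨-, p, ⟨hpl, hpP⟩, hpuniq⟩ := extLine hHyp hu hul
  obtain ⟨q, hqP, hqp, m₁, hum₁, hqm₁⟩ :=
    existsSecond hGQ hSubThick hFull hu hpP
  have hqOu : q ∈ subtendedOvoid I P' u := ⟨hqP, Or.inr ⟨m₁, hum₁, hqm₁⟩⟩
  have hqOv : q ∈ subtendedOvoid I P' v := hO ▸ hqOu
  obtain ⟨-, hcol⟩ := hqOv
  rcases hcol with h | ⟨m₂, hvm₂, hqm₂⟩
  · exact hv (h ▸ hqP)
  have hqnl : ¬ I q l := fun h => hqp (hpuniq q ⟨h, hqP⟩)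
  obtain ⟨pr, -, huniq⟩ := hGQ.2 q l hqnl
  have h1 : (⟨u, m₁⟩ : P × L) = ⟨v, m₂⟩ := by
    have hu' := huniq ⟨u, m₁⟩ ⟨hqm₁, hum₁, hul⟩
    have hv' := huniq ⟨v, m₂⟩ ⟨hqm₂, hvm₂, hvl⟩
    exact hu'.trans hv'.symm
  exact huv (congrArg Prod.fst h1 : u = v)

/-- for distinct points `u, v` of `A`, `π(u) = π(v)` iff no point of `A`
is collinear (in `S`) with both `u` and `v`. -/
theorem statement3 (I : P → L → Prop) (P' : Set P) (L' : Set L)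
    (hGQ : IsGQ I) (hThick : Thick I)
    (hSubGQ : IsGQ (SubIncid I P' L')) (hSubThick : Thick (SubIncid I P' L'))
    (hFull : IsFull I P' L') (hHyp : IsGeomHyperplane I P' L')
    (u v : APoint P') (huv : u ≠ v) :
    piPoint I P' u = piPoint I P' v ↔
      ¬ ∃ w : P, w ∉ P' ∧ Collinear I w u.1 ∧ Collinear I w v.1 := by
  obtain ⟨u1, hu⟩ := u
  obtain ⟨v1, hv⟩ := v
  have huv' : u1 ≠ v1 := fun h => huv (Subtype.ext h)
  have hpi : piPoint I P' ⟨u1, hu⟩ = piPoint I P' ⟨v1, hv⟩ ↔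
      subtendedOvoid I P' u1 = subtendedOvoid I P' v1 := by
    constructor
    · intro h; exact congrArg Subtype.val h
    · intro h; exact Subtype.ext h
  rw [hpi]
  constructor
  · -- O_u = O_v → no common external neighbor
    rintro hO ⟨w, hw, hwu, hwv⟩
    rcases hwu with rfl | ⟨m, hwm, hum⟩
    · rcases hwv with h | ⟨l, hwl, hvl⟩
      · exact huv' h
      · exact adjacent_ne hGQ hSubThick hFull hHyp hw hv huv' hwl hvl hO
    rcases hwv with rfl | ⟨n, hwn, hvn⟩
    · exact adjacent_ne hGQ hSubThick hFull hHyp hu hw huv' hum hwm hO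
    by_cases hvm : I v1 m
    · exact adjacent_ne hGQ hSubThick hFull hHyp hu hv huv' hum hvm hO
    obtain ⟨-, p, ⟨hpm, hpP⟩, hpuniq⟩ := extLine hHyp hw hwm
    have hpOu : p ∈ subtendedOvoid I P' u1 := ⟨hpP, Or.inr ⟨m, hum, hpm⟩⟩
    have hpOv : p ∈ subtendedOvoid I P' v1 := hO ▸ hpOu
    obtain ⟨-, hcol⟩ := hpOv
    rcases hcol with h | ⟨k, hvk, hpk⟩
    · exact hv (h ▸ hpP)
    obtain ⟨pr, -, huniq⟩ := hGQ.2 v1 m hvm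
    have hwn' : I w n ∧ I w m := ⟨hwn, hwm⟩
    have h1 : (⟨w, n⟩ : P × L) = ⟨p, k⟩ := by
      have h2 := huniq ⟨w, n⟩ ⟨hvn, hwn, hwm⟩
      have h3 := huniq ⟨p, k⟩ ⟨hvk, hpk, hpm⟩
      exact h2.trans h3.symm
    have hwp : w = p := congrArg Prod.fst h1
    exact hw (hwp ▸ hpP)
  · -- no common external neighbor → O_u = O_v
    intro hno
    have key : ∀ a b : P, a ∉ P' → b ∉ P' →
        (¬ ∃ w : P, w ∉ P' ∧ Collinear I w a ∧ Collinear I w b) →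
        subtendedOvoid I P' a ⊆ subtendedOvoid I P' b := by
      intro a b ha hb hn p hp
      obtain ⟨hpP, hcol⟩ := hp
      rcases hcol with h | ⟨m, ham, hpm⟩
      · exact absurd hpP (h ▸ ha)
      refine ⟨hpP, ?_⟩
      by_cases hbm : I b m
      · exact Or.inr ⟨m, hbm, hpm⟩
      obtain ⟨-, q, ⟨hqm, hqP⟩, hquniq⟩ := extLine hHyp ha ham
      have hpq : p = q := hquniq p ⟨hpm, hpP⟩
      obtain ⟨⟨y, M⟩, ⟨hbM, hyM, hym⟩, -⟩ := hGQ.2 b m hbm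
      by_cases hyP : y ∈ P'
      · have : y = q := hquniq y ⟨hym, hyP⟩
        exact Or.inr ⟨M, hbM, (hpq.trans this.symm) ▸ hyM⟩
      · exfalso
        exact hn ⟨y, hyP, Or.inr ⟨m, hym, ham⟩, Or.inr ⟨M, hyM, hbM⟩⟩
    have hno' : ¬ ∃ w : P, w ∉ P' ∧ Collinear I w v1 ∧ Collinear I w u1 := by
      rintro ⟨w, hw, h1, h2⟩; exact hno ⟨w, hw, h2, h1⟩
    exact Set.Subset.antisymm (key u1 v1 hu hv hno) (key v1 u1 hv hu hno')


end GQpaper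
end

section
/- Let S be a thick generalized quadrangle and S' a thick full subquadrangle of S that is a geometrical hyperplane of S, and let A be the geometry of points and lines of S not in S'. The relation on the points of A defined by 'x ≈ y if and only if x = y or no point of A is collinear in S with both x and y' is an equivalence relation, whose classes are exactly the fibers of the canonical projection π. -/
namespace GQpaper

variable {P L : Type}

/-- A line through an external point is not a line of the subquadrangle. -/
lemma line_not_sub {I : P → L → Prop} {P' : Set P} {L' : Set L}
    (hFull : IsFull I P' L') {x : P} (hx : x ∉ P') {l : L} (hxl : I x l) : l ∉ L' :=
  fun hl => hx (hFull l hl x hxl)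

/-- Key triangle lemma: two distinct external points with the same subtended ovoid
are not collinear. -/
lemma not_collinear_of_eq_ovoid {I : P → L → Prop} {P' : Set P} {L' : Set L}
    (hGQ : IsGQ I) (hSubThick : Thick (SubIncid I P' L'))
    (hFull : IsFull I P' L') (hHyp : IsGeomHyperplane I P' L')
    {x y : P} (hx : x ∉ P') (hy : y ∉ P') (hxy : x ≠ y)
    (hO : subtendedOvoid I P' x = subtendedOvoid I P' y)
    {l : L} (hxl : I x l) (hyl : I y l) : False := by
  have hlL : l ∉ L' := line_not_sub hFull hx hxl
  -- the unique point of P' on l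
  obtain ⟨-, u, ⟨hul, huP⟩, huniq⟩ :=
    ((hHyp.2 l).resolve_left (fun h => hlL h.1))
  -- a line m' of L' through u
  obtain ⟨m', _, _, _, _, _, hum', _, _⟩ := hSubThick.2 ⟨u, huP⟩
  -- a point q of P' on m' distinct from u
  obtain ⟨a, b, c, hab, _, _, ham, hbm, _⟩ := hSubThick.1 m'
  have hq : ∃ q : ↥P', q.1 ≠ u ∧ I q.1 m'.1 := by
    by_cases hau : a.1 = u
    · refine ⟨b, fun h => hab ?_, hbm⟩
      exact Subtype.ext (h.trans hau.symm).symm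
    · exact ⟨a, hau, ham⟩
  obtain ⟨q, hqu, hqm⟩ := hq
  -- a line n' of L' through q distinct from m'
  obtain ⟨n1, n2, n3, h12, _, _, hqn1, hqn2, _⟩ := hSubThick.2 q
  have hn : ∃ n' : ↥L', n' ≠ m' ∧ I q.1 n'.1 := by
    by_cases h1 : n1 = m'
    · exact ⟨n2, fun h => h12 (h1.trans h.symm), hqn2⟩
    · exact ⟨n1, h1, hqn1⟩
  obtain ⟨n', hnm, hqn⟩ := hn
  -- u is not on n'
  have hun : ¬ I u n'.1 := by
    intro hun
    exact hnm (Subtype.ext (hGQ.1 q.1 u hqu n'.1 m'.1 hqn hun hqm hum'))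
  -- x is not on n'
  have hxn : ¬ I x n'.1 := fun h => hx (hFull n'.1 n'.2 x h)
  -- the point p of n' collinear with x
  obtain ⟨⟨p, M⟩, ⟨hxM, hpM, hpn⟩, _⟩ := hGQ.2 x n'.1 hxn
  have hpP : p ∈ P' := hFull n'.1 n'.2 p hpn
  have hpOx : p ∈ subtendedOvoid I P' x := ⟨hpP, Or.inr ⟨M, hxM, hpM⟩⟩
  have hpOy : p ∈ subtendedOvoid I P' y := hO ▸ hpOx
  obtain ⟨K, hyK, hpK⟩ := hpOy.2.resolve_left (fun h => hy (h ▸ hpP))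
  -- p is not on l
  have hpl : ¬ I p l := by
    intro hpl
    exact hun ((huniq p ⟨hpl, hpP⟩) ▸ hpn)
  -- contradiction with the GQ axiom for (p, l)
  obtain ⟨z, hz1, hz2⟩ := hGQ.2 p l hpl
  have e1 : ((x, M) : P × L) = z := hz2 (x, M) ⟨hpM, hxM, hxl⟩
  have e2 : ((y, K) : P × L) = z := hz2 (y, K) ⟨hpK, hyK, hyl⟩
  exact hxy (congrArg Prod.fst (e1.trans e2.symm))

/-- If two distinct external points subtend the same ovoid, no external point is
collinear with both. -/
lemma no_common_of_eq_ovoid {I : P → L → Prop} {P' : Set P} {L' : Set L}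
    (hGQ : IsGQ I) (hSubThick : Thick (SubIncid I P' L'))
    (hFull : IsFull I P' L') (hHyp : IsGeomHyperplane I P' L')
    {x y : P} (hx : x ∉ P') (hy : y ∉ P') (hxy : x ≠ y)
    (hO : subtendedOvoid I P' x = subtendedOvoid I P' y) :
    ¬ ∃ w : P, w ∉ P' ∧ Collinear I w x ∧ Collinear I w y := by
  rintro ⟨w, hw, hwx, hwy⟩
  have hncoll : ∀ l : L, I x l → I y l → False :=
    fun l => not_collinear_of_eq_ovoid hGQ hSubThick hFull hHyp hx hy hxy hO
  rcases hwy with hwy | ⟨N, hwN, hyN⟩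
  · rcases hwx with hwx | ⟨M, hwM, hxM⟩
    · exact hxy (hwx.symm.trans hwy)
    · exact hncoll M hxM (hwy ▸ hwM)
  · have hxN : ¬ I x N := fun h => hncoll N h hyN
    have hNL : N ∉ L' := line_not_sub hFull hw hwN
    obtain ⟨-, v, ⟨hvN, hvP⟩, -⟩ := ((hHyp.2 N).resolve_left (fun h => hNL h.1))
    have hvOy : v ∈ subtendedOvoid I P' y := ⟨hvP, Or.inr ⟨N, hyN, hvN⟩⟩
    have hvOx : v ∈ subtendedOvoid I P' x := hO ▸ hvOy
    obtain ⟨K, hxK, hvK⟩ := hvOx.2.resolve_left (fun h => hx (h ▸ hvP))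
    rcases hwx with hwx | ⟨M, hwM, hxM⟩
    · exact hxN (hwx ▸ hwN)
    · obtain ⟨z, hz1, hz2⟩ := hGQ.2 x N hxN
      have e1 : ((w, M) : P × L) = z := hz2 (w, M) ⟨hxM, hwM, hwN⟩
      have e2 : ((v, K) : P × L) = z := hz2 (v, K) ⟨hxK, hvK, hvN⟩
      have : w = v := congrArg Prod.fst (e1.trans e2.symm)
      exact hw (this ▸ hvP)

/-- If no external point is collinear with both, the subtended ovoids agree
(one inclusion). -/
lemma ovoid_subset_of_no_common {I : P → L → Prop} {P' : Set P} {L' : Set L}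
    (hGQ : IsGQ I) (hFull : IsFull I P' L') (hHyp : IsGeomHyperplane I P' L')
    {x y : P} (hx : x ∉ P')
    (h : ¬ ∃ w : P, w ∉ P' ∧ Collinear I w x ∧ Collinear I w y) :
    subtendedOvoid I P' x ⊆ subtendedOvoid I P' y := by
  intro u hu
  obtain ⟨huP, hcoll⟩ := hu
  obtain ⟨M, hxM, huM⟩ := hcoll.resolve_left (fun e => hx (e ▸ huP))
  have hnxy : ¬ Collinear I x y := fun hc => h ⟨x, hx, Or.inl rfl, hc⟩
  have hyM : ¬ I y M := fun hyM => hnxy (Or.inr ⟨M, hxM, hyM⟩)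
  have hML : M ∉ L' := line_not_sub hFull hx hxM
  obtain ⟨-, u', ⟨-, -⟩, huniq⟩ := ((hHyp.2 M).resolve_left (fun hh => hML hh.1))
  obtain ⟨⟨z, N⟩, ⟨hyN, hzN, hzM⟩, _⟩ := hGQ.2 y M hyM
  by_cases hzP : z ∈ P'
  · have : z = u := (huniq z ⟨hzM, hzP⟩).trans (huniq u ⟨huM, huP⟩).symm
    exact ⟨huP, Or.inr ⟨N, hyN, this ▸ hzN⟩⟩
  · exact absurd ⟨z, hzP, Or.inr ⟨M, hzM, hxM⟩, Or.inr ⟨N, hzN, hyN⟩⟩ h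

lemma eq_ovoid_of_no_common {I : P → L → Prop} {P' : Set P} {L' : Set L}
    (hGQ : IsGQ I) (hFull : IsFull I P' L') (hHyp : IsGeomHyperplane I P' L')
    {x y : P} (hx : x ∉ P') (hy : y ∉ P')
    (h : ¬ ∃ w : P, w ∉ P' ∧ Collinear I w x ∧ Collinear I w y) :
    subtendedOvoid I P' x = subtendedOvoid I P' y :=
  Set.Subset.antisymm
    (ovoid_subset_of_no_common hGQ hFull hHyp hx h)
    (ovoid_subset_of_no_common hGQ hFull hHyp hy
      (fun ⟨w, hw, h1, h2⟩ => h ⟨w, hw, h2, h1⟩))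

/-- the relation `x ≈ y ↔ x = y ∨ (no point of A is collinear with both)`
is an equivalence relation on the points of `A`, whose classes are exactly the fibers
of the canonical projection `π`. -/
theorem statement4 (I : P → L → Prop) (P' : Set P) (L' : Set L)
    (hGQ : IsGQ I) (hThick : Thick I)
    (hSubGQ : IsGQ (SubIncid I P' L')) (hSubThick : Thick (SubIncid I P' L'))
    (hFull : IsFull I P' L') (hHyp : IsGeomHyperplane I P' L') :
    Equivalence (fun x y : APoint P' =>
        x = y ∨ ¬ ∃ w : P, w ∉ P' ∧ Collinear I w x.1 ∧ Collinear I w y.1) ∧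
    (∀ x y : APoint P',
      (x = y ∨ ¬ ∃ w : P, w ∉ P' ∧ Collinear I w x.1 ∧ Collinear I w y.1) ↔
        piPoint I P' x = piPoint I P' y) := by
  have key : ∀ x y : APoint P',
      (x = y ∨ ¬ ∃ w : P, w ∉ P' ∧ Collinear I w x.1 ∧ Collinear I w y.1) ↔
        piPoint I P' x = piPoint I P' y := by
    intro x y
    constructor
    · rintro (rfl | h)
      · rfl
      · exact Subtype.ext (eq_ovoid_of_no_common hGQ hFull hHyp x.2 y.2 h)
    · intro h
      have hO : subtendedOvoid I P' x.1 = subtendedOvoid I P' y.1 :=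
        congrArg Subtype.val h
      by_cases hxy : x = y
      · exact Or.inl hxy
      · exact Or.inr (no_common_of_eq_ovoid hGQ hSubThick hFull hHyp x.2 y.2
          (fun e => hxy (Subtype.ext e)) hO)
  refine ⟨⟨fun x => Or.inl rfl, ?_, ?_⟩, key⟩
  · intro x y h
    exact (key y x).mpr ((key x y).mp h).symm
  · intro x y z hxy hyz
    exact (key x z).mpr (((key x y).mp hxy).trans ((key y z).mp hyz))

end GQpaper
end

section
/- Let S be a finite generalized quadrangle of order (s,t) with s ≥ 2, and S' a proper full subquadrangle of order (s,t') such that t' ≠ 1, t = s·t', (θ−1)·t = s², and every subtended ovoid of S' is subtended by exactly θ points of S outside S', where θ > 1. Let x and x' be points of S outside S'. If x' is collinear with no point of O_x⊥, then |O_x ∩ O_{x'}| = t/s + 1. If x' ∉ O_x⊥ but x' is collinear with some point of O_x⊥, then |O_x ∩ O_{x'}| = 1. -/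
namespace GQpaper

variable {P L : Type}

section Counting

open Finset

variable {α β : Type}

open scoped Classical in
/-- Fiberwise count of a finite relation set over the second coordinate. -/
lemma fiberSumSnd [Finite α] [Finite β] (S : Set (α × β)) (B : Finset β)
    (h : ∀ p ∈ S, p.2 ∈ B) :
    S.ncard = ∑ b ∈ B, {a | (a, b) ∈ S}.ncard := by
  classical
  have hS : S.Finite := Set.toFinite S
  rw [Set.ncard_eq_toFinset_card S hS]
  rw [Finset.card_eq_sum_card_fiberwise (f := Prod.snd) (t := B)
    (fun p hp => h p (hS.mem_toFinset.mp hp))]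
  refine Finset.sum_congr rfl fun b _ => ?_
  have himg : {p : α × β | (p ∈ S ∧ p.2 = b)} = (fun a => (a, b)) '' {a | (a, b) ∈ S} := by
    ext ⟨a', b'⟩
    constructor
    · rintro ⟨hp, rfl⟩; exact ⟨a', hp, rfl⟩
    · rintro ⟨a, ha, heq⟩; cases heq; exact ⟨ha, rfl⟩
  have hinj : Function.Injective (fun a : α => (a, b)) := by
    intro a a' h; simpa using h
  have : {a | (a, b) ∈ S}.ncard = {p : α × β | (p ∈ S ∧ p.2 = b)}.ncard := by
    rw [himg, Set.ncard_image_of_injective _ hinj]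
  rw [this, Set.ncard_eq_toFinset_card _ (Set.toFinite _)]
  congr 1
  ext p
  simp [Set.Finite.mem_toFinset]

lemma fiberConstSnd [Finite α] [Finite β] (S : Set (α × β)) (B : Set β) (c : ℕ)
    (hmem : ∀ p ∈ S, p.2 ∈ B) (hfib : ∀ b ∈ B, {a | (a, b) ∈ S}.ncard = c) :
    S.ncard = B.ncard * c := by
  classical
  have hB : B.Finite := Set.toFinite B
  rw [fiberSumSnd S hB.toFinset (fun p hp => hB.mem_toFinset.mpr (hmem p hp))]
  rw [Finset.sum_congr rfl (fun b hb => hfib b (hB.mem_toFinset.mp hb)),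
    Finset.sum_const, smul_eq_mul, Set.ncard_eq_toFinset_card B hB]

lemma fiberConstFst [Finite α] [Finite β] (S : Set (α × β)) (A : Set α) (c : ℕ)
    (hmem : ∀ p ∈ S, p.1 ∈ A) (hfib : ∀ a ∈ A, {b | (a, b) ∈ S}.ncard = c) :
    S.ncard = A.ncard * c := by
  classical
  have hswap : S.ncard = (Prod.swap '' S).ncard :=
    (Set.ncard_image_of_injective _ Prod.swap_injective).symm
  rw [hswap]
  refine fiberConstSnd _ A c ?_ ?_
  · rintro p ⟨q, hq, rfl⟩; exact hmem q hq
  · intro a ha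
    have : {b | (b, a) ∈ Prod.swap '' S} = {b | (a, b) ∈ S} := by
      ext b
      simp only [Set.mem_setOf_eq, Set.mem_image]
      constructor
      · rintro ⟨q, hq, heq⟩
        have : q = (a, b) := by
          have := congrArg Prod.swap heq; simpa using this
        cases this; exact hq
      · intro hb; exact ⟨(a, b), hb, rfl⟩
    rw [this]; exact hfib a ha

/-- A unique matching between two finite sets gives equal cardinality. -/
lemma matchCard [Finite α] [Finite β] (A : Set α) (B : Set β) (R : α → β → Prop)
    (h1 : ∀ a ∈ A, ∃! b, b ∈ B ∧ R a b) (h2 : ∀ b ∈ B, ∃! a, a ∈ A ∧ R a b) :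
    A.ncard = B.ncard := by
  classical
  have := fiberConstFst {p : α × β | p.1 ∈ A ∧ p.2 ∈ B ∧ R p.1 p.2} A 1
    (fun p hp => hp.1)
    (fun a ha => by
      obtain ⟨b, ⟨hbB, hbR⟩, hbu⟩ := h1 a ha
      rw [Set.ncard_eq_one]
      exact ⟨b, by
        ext b'; simp only [Set.mem_setOf_eq, Set.mem_singleton_iff]
        exact ⟨fun h => hbu b' ⟨h.2.1, h.2.2⟩, fun h => h ▸ ⟨ha, hbB, hbR⟩⟩⟩)
  have := fiberConstSnd {p : α × β | p.1 ∈ A ∧ p.2 ∈ B ∧ R p.1 p.2} B 1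
    (fun p hp => hp.2.1)
    (fun b hb => by
      obtain ⟨a, ⟨haA, haR⟩, hau⟩ := h2 b hb
      rw [Set.ncard_eq_one]
      exact ⟨a, by
        ext a'; simp only [Set.mem_setOf_eq, Set.mem_singleton_iff]
        exact ⟨fun h => hau a' ⟨h.1, h.2.2⟩, fun h => h ▸ ⟨haA, hb, haR⟩⟩⟩)
  omega

end Counting
section GQBasic

variable {Q M : Type} {J : Q → M → Prop}

lemma collinear_refl (J : Q → M → Prop) (a : Q) : Collinear J a a := Or.inl rfl

lemma collinear_symm {a b : Q} (h : Collinear J a b) : Collinear J b a := by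
  rcases h with h | ⟨l, h1, h2⟩
  · exact Or.inl h.symm
  · exact Or.inr ⟨l, h2, h1⟩

/-- Two distinct points lie on at most one common line. -/
lemma line_unique (hGQ : IsGQ J) {a b : Q} (hab : a ≠ b) {l m : M}
    (hal : J a l) (hbl : J b l) (ham : J a m) (hbm : J b m) : l = m :=
  hGQ.1 a b hab l m hal hbl ham hbm

/-- The projection of a point onto a line it does not lie on: the unique point of the
line collinear with it. -/
lemma proj_exists_unique (hGQ : IsGQ J) {z : Q} {l : M} (h : ¬ J z l) :
    ∃! y : Q, J y l ∧ Collinear J z y := by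
  obtain ⟨⟨p, m⟩, ⟨h1, h2, h3⟩, hu⟩ := hGQ.2 z l h
  refine ⟨p, ⟨h3, Or.inr ⟨m, h1, h2⟩⟩, ?_⟩
  rintro y ⟨hyl, hy⟩
  rcases hy with rfl | ⟨n, hzn, hyn⟩
  · exact absurd hyl h
  · exact congrArg Prod.fst (hu (y, n) ⟨hzn, hyn, hyl⟩)

/-- Two points of a line collinear with an off-line point coincide. -/
lemma proj_unique (hGQ : IsGQ J) {z : Q} {l : M} (h : ¬ J z l) {y y' : Q}
    (hyl : J y l) (hy'l : J y' l) (hy : Collinear J z y) (hy' : Collinear J z y') :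
    y = y' := by
  obtain ⟨w, _, hw⟩ := proj_exists_unique hGQ h
  rw [hw y ⟨hyl, hy⟩, hw y' ⟨hy'l, hy'⟩]

variable [Finite Q] [Finite M] {σ τ : ℕ}

/-- The perp of a point in a finite GQ of order `(σ, τ)` has `1 + σ(τ+1)` points. -/
lemma g_perp_card (hGQ : IsGQ J) (hOrd : HasOrder J σ τ) (a : Q) :
    {w | Collinear J a w}.ncard = 1 + σ * (τ + 1) := by
  classical
  have hsplit : {w | Collinear J a w} = {a} ∪ {w | Collinear J a w ∧ w ≠ a} := by
    ext w
    simp only [Set.mem_setOf_eq, Set.mem_union, Set.mem_singleton_iff]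
    constructor
    · intro h; by_cases hw : w = a
      · exact Or.inl hw
      · exact Or.inr ⟨h, hw⟩
    · rintro (rfl | ⟨h, _⟩)
      · exact Or.inl rfl
      · exact h
  rw [hsplit, Set.ncard_union_eq (by simp [Set.disjoint_left]) (Set.toFinite _)
    (Set.toFinite _), Set.ncard_singleton]
  congr 1
  -- match points (≠ a) collinear with a to flags (w, l) with a,w on l
  have hm : {w | Collinear J a w ∧ w ≠ a}.ncard
      = {p : Q × M | J p.1 p.2 ∧ J a p.2 ∧ p.1 ≠ a}.ncard := by
    refine matchCard _ _ (fun w p => p.1 = w) ?_ ?_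
    · rintro w ⟨hw, hwa⟩
      rcases hw with rfl | ⟨l, hal, hwl⟩
      · exact absurd rfl hwa
      refine ⟨(w, l), ⟨⟨hwl, hal, hwa⟩, rfl⟩, ?_⟩
      rintro ⟨w', l'⟩ ⟨⟨h1, h2, h3⟩, hw'⟩
      obtain rfl := hw'
      have hl : l' = l := line_unique hGQ (Ne.symm hwa) h2 h1 hal hwl
      rw [hl]
    · rintro ⟨w, l⟩ ⟨h1, h2, h3⟩
      refine ⟨w, ⟨⟨Or.inr ⟨l, h2, h1⟩, h3⟩, rfl⟩, ?_⟩
      rintro w' ⟨_, rfl⟩; rfl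
  rw [hm]
  have := fiberConstSnd {p : Q × M | J p.1 p.2 ∧ J a p.2 ∧ p.1 ≠ a} {l | J a l} σ
    (fun p hp => hp.2.1)
    (fun l hl => by
      have hline : {w | (w, l) ∈ {p : Q × M | J p.1 p.2 ∧ J a p.2 ∧ p.1 ≠ a}}
          = {w | J w l} \ {a} := by
        ext w
        simp only [Set.mem_setOf_eq, Set.mem_diff, Set.mem_singleton_iff]
        exact ⟨fun h => ⟨h.1, h.2.2⟩, fun h => ⟨h.1, hl, h.2⟩⟩
      rw [hline, Set.ncard_diff_singleton_of_mem
        (show a ∈ {w | J w l} from hl), hOrd.1 l]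
      simp)
  rw [this, hOrd.2 a, mul_comm]

/-- The trace of two non-collinear points has `τ + 1` points. -/
lemma g_trace_card (hGQ : IsGQ J) (hOrd : HasOrder J σ τ) {a b : Q}
    (hab : ¬ Collinear J a b) :
    {w | Collinear J a w ∧ Collinear J b w}.ncard = τ + 1 := by
  classical
  have : {w | Collinear J a w ∧ Collinear J b w}.ncard = {l | J a l}.ncard := by
    refine matchCard _ _ (fun w l => J w l) ?_ ?_
    · rintro w ⟨hwa, hwb⟩
      have hwa' : w ≠ a := by rintro rfl; exact hab (collinear_symm hwb)
      rcases hwa with heq | ⟨l, hal, hwl⟩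
      · exact absurd heq.symm hwa'
      refine ⟨l, ⟨hal, hwl⟩, ?_⟩
      rintro l' ⟨hal', hwl'⟩
      exact line_unique hGQ (Ne.symm hwa') hal' hwl' hal hwl
    · intro l hl
      have hbl : ¬ J b l := fun hbl => hab (Or.inr ⟨l, hl, hbl⟩)
      obtain ⟨w, ⟨hwl, hwb⟩, hu⟩ := proj_exists_unique hGQ hbl
      refine ⟨w, ⟨⟨Or.inr ⟨l, hl, hwl⟩, hwb⟩, hwl⟩, ?_⟩
      rintro w' ⟨⟨_, hw'b⟩, hw'l⟩
      exact hu w' ⟨hw'l, hw'b⟩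
  rw [this, hOrd.2 a]

/-- The common perp of two distinct collinear points is the point set of their line. -/
lemma g_perp_pair_line (hGQ : IsGQ J) {a b : Q} (hab : a ≠ b) {l : M}
    (hal : J a l) (hbl : J b l) :
    {w | Collinear J a w ∧ Collinear J b w} = {w | J w l} := by
  ext w
  simp only [Set.mem_setOf_eq]
  constructor
  · rintro ⟨hwa, hwb⟩
    by_contra hwl
    exact hab (proj_unique hGQ hwl hal hbl (collinear_symm hwa) (collinear_symm hwb))
  · intro hwl
    exact ⟨Or.inr ⟨l, hal, hwl⟩, Or.inr ⟨l, hbl, hwl⟩⟩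

/-- Point count of a finite GQ of order `(σ, τ)`. -/
lemma g_point_count (hGQ : IsGQ J) (hOrd : HasOrder J σ τ) (hne : Nonempty Q) :
    (Set.univ : Set Q).ncard = (σ + 1) * (σ * τ + 1) := by
  classical
  obtain ⟨a⟩ := hne
  set S : Set (Q × Q) := {p | ¬ Collinear J a p.1 ∧ Collinear J a p.2 ∧ Collinear J p.1 p.2}
    with hSdef
  have hfst := fiberConstFst S {w | ¬ Collinear J a w} (τ + 1)
    (fun p hp => hp.1)
    (fun b hb => by
      have : {c | (b, c) ∈ S} = {w | Collinear J a w ∧ Collinear J b w} := by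
        ext c; simp only [hSdef, Set.mem_setOf_eq]; tauto
      rw [this]; exact g_trace_card hGQ hOrd hb)
  have hsnd := fiberConstSnd S {w | Collinear J a w ∧ w ≠ a} (σ * τ)
    (fun p hp => by
      refine ⟨hp.2.1, ?_⟩
      rintro rfl
      exact hp.1 (collinear_symm hp.2.2))
    (fun c hc => by
      obtain ⟨hca, hcne⟩ := hc
      obtain ⟨l, hal, hcl⟩ : ∃ l, J a l ∧ J c l := by
        rcases hca with heq | ⟨l, hal, hcl⟩
        · exact absurd heq.symm hcne
        · exact ⟨l, hal, hcl⟩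
      have hpart : {w | Collinear J c w} = {w | J w l} ∪ {b | (b, c) ∈ S} := by
        ext w
        simp only [hSdef, Set.mem_setOf_eq, Set.mem_union]
        constructor
        · intro hcw
          by_cases haw : Collinear J a w
          · left
            have := g_perp_pair_line hGQ (Ne.symm hcne) hal hcl
            have hw : w ∈ {w | Collinear J a w ∧ Collinear J c w} := ⟨haw, hcw⟩
            rw [this] at hw; exact hw
          · exact Or.inr ⟨haw, hca, collinear_symm hcw⟩
        · rintro (hwl | ⟨_, _, hwc⟩)
          · exact Or.inr ⟨l, hcl, hwl⟩
          · exact collinear_symm hwc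
      have hdisj : Disjoint {w | J w l} {b | (b, c) ∈ S} := by
        rw [Set.disjoint_left]
        intro w hwl hwS
        exact hwS.1 (Or.inr ⟨l, hal, hwl⟩)
      have := g_perp_card hGQ hOrd c
      rw [hpart, Set.ncard_union_eq hdisj (Set.toFinite _) (Set.toFinite _), hOrd.1 l]
        at this
      have hexp : σ * (τ + 1) = σ * τ + σ := by ring
      rw [hexp] at this
      omega)
  have hperp1 : {w | Collinear J a w ∧ w ≠ a}.ncard = σ * (τ + 1) := by
    have : {w | Collinear J a w ∧ w ≠ a} = {w | Collinear J a w} \ {a} := by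
      ext w; simp only [Set.mem_setOf_eq, Set.mem_diff, Set.mem_singleton_iff]
    rw [this, Set.ncard_diff_singleton_of_mem
      (show a ∈ {w | Collinear J a w} from collinear_refl J a),
      g_perp_card hGQ hOrd a]
    simp
  rw [hperp1] at hsnd
  have hN : {w | ¬ Collinear J a w}.ncard * (τ + 1) = σ * (τ + 1) * (σ * τ) := by
    rw [← hfst, hsnd]
  have hNval : {w | ¬ Collinear J a w}.ncard = σ * (σ * τ) := by
    have h1 : σ * (τ + 1) * (σ * τ) = (σ * (σ * τ)) * (τ + 1) := by ring
    rw [h1] at hN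
    exact Nat.eq_of_mul_eq_mul_right (Nat.succ_pos τ) hN
  have hsplit : (Set.univ : Set Q) = {w | Collinear J a w} ∪ {w | ¬ Collinear J a w} := by
    ext w; simp [em]
  have hdisj2 : Disjoint {w | Collinear J a w} {w | ¬ Collinear J a w} := by
    rw [Set.disjoint_left]; exact fun w hw hw2 => hw2 hw
  rw [hsplit, Set.ncard_union_eq hdisj2 (Set.toFinite _) (Set.toFinite _),
    g_perp_card hGQ hOrd a, hNval]
  ring

end GQBasic
section Sub

set_option linter.unusedSectionVars false

variable {P L : Type} [Finite P] [Finite L] {I : P → L → Prop} {P' : Set P} {L' : Set L}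
  {s t t' : ℕ}

/-- Any line of `S` joining two points of `S'` is a line of `S'`. -/
lemma sub_line_mem (hGQ : IsGQ I) (hSubGQ : IsGQ (SubIncid I P' L'))
    (hSubOrd : HasOrder (SubIncid I P' L') s t') (ht'2 : 2 ≤ t')
    {y y' : P} (hy : y ∈ P') (hy' : y' ∈ P') (hne : y ≠ y') {n : L}
    (hyn : I y n) (hy'n : I y' n) : n ∈ L' := by
  -- find a line of L' through y missing y'
  have hLy : {m : ↥L' | I y m.1}.ncard = t' + 1 := hSubOrd.2 ⟨y, hy⟩
  obtain ⟨m, hm, hym⟩ : ∃ m : ↥L', I y m.1 ∧ ¬ I y' m.1 := by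
    by_contra hcon
    push_neg at hcon
    have hsub : {m : ↥L' | I y m.1}.Subsingleton := by
      intro m₁ h₁ m₂ h₂
      exact Subtype.ext (line_unique hGQ hne h₁ (hcon m₁ h₁) h₂ (hcon m₂ h₂))
    have := (Set.ncard_le_one (Set.toFinite _)).mpr
      (fun a ha b hb => hsub ha hb)
    omega
  have hny'm : ¬ SubIncid I P' L' ⟨y', hy'⟩ m := hym
  obtain ⟨⟨p, m'⟩, ⟨h1, h2, h3⟩, -⟩ := hSubGQ.2 ⟨y', hy'⟩ m hny'm
  have hpy : p.1 = y := by
    refine proj_unique hGQ hym h3 hm ?_ ?_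
    · exact Or.inr ⟨m'.1, h1, h2⟩
    · exact Or.inr ⟨n, hy'n, hyn⟩
  have : n = m'.1 := by
    refine line_unique hGQ (Ne.symm hne) hy'n ?_ h1 ?_
    · exact hyn
    · rw [← hpy]; exact h2
  rw [this]; exact m'.2

lemma sub_collinear_iff (hGQ : IsGQ I) (hSubGQ : IsGQ (SubIncid I P' L'))
    (hSubOrd : HasOrder (SubIncid I P' L') s t') (ht'2 : 2 ≤ t')
    (a b : ↥P') : Collinear (SubIncid I P' L') a b ↔ Collinear I a.1 b.1 := by
  constructor
  · rintro (rfl | ⟨l, h1, h2⟩)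
    · exact Or.inl rfl
    · exact Or.inr ⟨l.1, h1, h2⟩
  · rintro (h | ⟨n, h1, h2⟩)
    · exact Or.inl (Subtype.ext h)
    · by_cases hab : a = b
      · exact Or.inl hab
      · have hn : n ∈ L' := sub_line_mem hGQ hSubGQ hSubOrd ht'2 a.2 b.2
          (fun h => hab (Subtype.ext h)) h1 h2
        exact Or.inr ⟨⟨n, hn⟩, h1, h2⟩

lemma ncard_subtype (P' : Set P) (q : P → Prop) :
    {w : ↥P' | q w.1}.ncard = {w | w ∈ P' ∧ q w}.ncard := by
  rw [← Set.ncard_image_of_injective {w : ↥P' | q w.1} Subtype.val_injective]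
  congr 1
  ext w
  constructor
  · rintro ⟨⟨v, hv⟩, hq, rfl⟩; exact ⟨hv, hq⟩
  · rintro ⟨hw, hq⟩; exact ⟨⟨w, hw⟩, hq, rfl⟩

/-- Each line of `S'` carries a unique point of the ovoid subtended by an external
point. -/
lemma ovoid_meet (hGQ : IsGQ I) (hFull : IsFull I P' L') {x₀ : P} (hx₀ : x₀ ∉ P')
    {m : L} (hm : m ∈ L') :
    ∃! y, (y ∈ P' ∧ Collinear I x₀ y) ∧ I y m := by
  have hnx : ¬ I x₀ m := fun h => hx₀ (hFull m hm x₀ h)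
  obtain ⟨y, ⟨hyl, hyc⟩, hu⟩ := proj_exists_unique hGQ hnx
  exact ⟨y, ⟨⟨hFull m hm y hyl, hyc⟩, hyl⟩, fun y' ⟨⟨_, hc'⟩, hl'⟩ => hu y' ⟨hl', hc'⟩⟩

/-- Points of a subtended ovoid are pairwise non-collinear. -/
lemma ovoid_noncoll (hGQ : IsGQ I) (hSubGQ : IsGQ (SubIncid I P' L'))
    (hSubOrd : HasOrder (SubIncid I P' L') s t') (ht'2 : 2 ≤ t')
    (hFull : IsFull I P' L') {x₀ : P} (hx₀ : x₀ ∉ P')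
    {y y' : P} (hy : y ∈ subtendedOvoid I P' x₀) (hy' : y' ∈ subtendedOvoid I P' x₀)
    (hne : y ≠ y') : ¬ Collinear I y y' := by
  rintro (h | ⟨n, h1, h2⟩)
  · exact hne h
  · have hn : n ∈ L' := sub_line_mem hGQ hSubGQ hSubOrd ht'2 hy.1 hy'.1 hne h1 h2
    obtain ⟨z, -, hz⟩ := ovoid_meet hGQ hFull hx₀ hn
    exact hne ((hz y ⟨hy, h1⟩).trans (hz y' ⟨hy', h2⟩).symm)

/-- A line through an external point carries at most one point of `P'`. -/
lemma ext_line_subsingleton (hGQ : IsGQ I) (hSubGQ : IsGQ (SubIncid I P' L'))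
    (hSubOrd : HasOrder (SubIncid I P' L') s t') (ht'2 : 2 ≤ t')
    (hFull : IsFull I P' L') {x₀ : P} (hx₀ : x₀ ∉ P') {l : L} (hl : I x₀ l)
    {y y' : P} (hy : y ∈ P') (hy' : y' ∈ P') (hyl : I y l) (hy'l : I y' l) :
    y = y' := by
  by_contra hne
  exact hx₀ (hFull l (sub_line_mem hGQ hSubGQ hSubOrd ht'2 hy hy' hne hyl hy'l) x₀ hl)

lemma P'_ncard (hSubGQ : IsGQ (SubIncid I P' L'))
    (hSubOrd : HasOrder (SubIncid I P' L') s t') (hP'ne : P'.Nonempty) :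
    P'.ncard = (s + 1) * (s * t' + 1) := by
  have : Nonempty ↥P' := hP'ne.to_subtype
  have := g_point_count hSubGQ hSubOrd this
  rwa [Set.ncard_univ, Nat.card_coe_set_eq] at this

/-- A point of `P'` off the subtended ovoid is collinear with exactly `t' + 1` of its
points. -/
lemma kval_P' (hGQ : IsGQ I) (hSubGQ : IsGQ (SubIncid I P' L'))
    (hSubOrd : HasOrder (SubIncid I P' L') s t') (ht'2 : 2 ≤ t')
    (hFull : IsFull I P' L') {x₀ : P} (hx₀ : x₀ ∉ P')
    {u : P} (hu : u ∈ P') (hu' : u ∉ subtendedOvoid I P' x₀) :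
    {y | y ∈ subtendedOvoid I P' x₀ ∧ Collinear I u y}.ncard = t' + 1 := by
  have hB : {m : ↥L' | I u m.1}.ncard = t' + 1 := hSubOrd.2 ⟨u, hu⟩
  rw [← hB]
  refine matchCard _ _ (fun y m => I y m.1) ?_ ?_
  · rintro y ⟨hyO, hyc⟩
    have hyu : y ≠ u := fun h => hu' (h ▸ hyO)
    rcases hyc with heq | ⟨n, h1, h2⟩
    · exact absurd heq.symm hyu
    have hn : n ∈ L' := sub_line_mem hGQ hSubGQ hSubOrd ht'2 hu hyO.1 (Ne.symm hyu) h1 h2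
    refine ⟨⟨n, hn⟩, ⟨h1, h2⟩, ?_⟩
    rintro ⟨n', hn'⟩ ⟨hm1, hm2⟩
    exact Subtype.ext (line_unique hGQ (Ne.symm hyu) hm1 hm2 h1 h2)
  · rintro ⟨m, hm⟩ hum
    obtain ⟨y, ⟨hyO, hym⟩, hyu⟩ := ovoid_meet hGQ hFull hx₀ hm
    refine ⟨y, ⟨⟨hyO, Or.inr ⟨m, hum, hym⟩⟩, hym⟩, ?_⟩
    rintro y' ⟨⟨hy'O, _⟩, hy'm⟩
    exact hyu y' ⟨hy'O, hy'm⟩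

lemma perp_P'_card (hGQ : IsGQ I) (hSubGQ : IsGQ (SubIncid I P' L'))
    (hSubOrd : HasOrder (SubIncid I P' L') s t') (ht'2 : 2 ≤ t')
    {y : P} (hy : y ∈ P') :
    {w | w ∈ P' ∧ Collinear I y w}.ncard = 1 + s * (t' + 1) := by
  have := g_perp_card hSubGQ hSubOrd ⟨y, hy⟩
  have heq : {w : ↥P' | Collinear (SubIncid I P' L') ⟨y, hy⟩ w}
      = {w : ↥P' | Collinear I y w.1} := by
    ext w
    exact sub_collinear_iff hGQ hSubGQ hSubOrd ht'2 ⟨y, hy⟩ w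
  rw [heq, ncard_subtype P' (fun w => Collinear I y w)] at this
  exact this

end Sub
section Sub2

set_option linter.unusedSectionVars false

variable {P L : Type} [Finite P] [Finite L] {I : P → L → Prop} {P' : Set P} {L' : Set L}
  {s t t' : ℕ}

/-- The subtended ovoid of an external point has `s·t' + 1` points. -/
lemma Ox_card (hGQ : IsGQ I) (hSubGQ : IsGQ (SubIncid I P' L'))
    (hSubOrd : HasOrder (SubIncid I P' L') s t') (ht'2 : 2 ≤ t')
    (hFull : IsFull I P' L') (hP'ne : P'.Nonempty) {x₀ : P} (hx₀ : x₀ ∉ P') :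
    (subtendedOvoid I P' x₀).ncard = s * t' + 1 := by
  classical
  set Ox := subtendedOvoid I P' x₀ with hOx
  have hOsub : Ox ⊆ P' := fun y hy => hy.1
  set S : Set (P × P) := {p | p.1 ∈ P' ∧ p.2 ∈ Ox ∧ Collinear I p.1 p.2} with hS
  -- count over the second coordinate
  have hsnd := fiberConstSnd S Ox (1 + s * (t' + 1))
    (fun p hp => hp.2.1)
    (fun y hy => by
      have heq : {u | (u, y) ∈ S} = {u | u ∈ P' ∧ Collinear I y u} := by
        ext u
        simp only [hS, Set.mem_setOf_eq]
        exact ⟨fun h => ⟨h.1, collinear_symm h.2.2⟩,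
          fun h => ⟨h.1, hy, collinear_symm h.2⟩⟩
      rw [heq]
      exact perp_P'_card hGQ hSubGQ hSubOrd ht'2 (hOsub hy))
  -- count over the first coordinate, split by membership in the ovoid
  have hIn := fiberConstFst {p ∈ S | p.1 ∈ Ox} Ox 1
    (fun p hp => hp.2)
    (fun u hu => by
      rw [Set.ncard_eq_one]
      refine ⟨u, ?_⟩
      ext y
      simp only [hS, Set.mem_setOf_eq, Set.mem_sep_iff, Set.mem_singleton_iff]
      constructor
      · rintro ⟨⟨h1, h2, h3⟩, h4⟩
        by_contra hne
        exact ovoid_noncoll hGQ hSubGQ hSubOrd ht'2 hFull hx₀ hu h2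
          (fun h => hne h.symm) h3
      · rintro rfl
        exact ⟨⟨hOsub hu, hu, collinear_refl I _⟩, hu⟩)
  have hOut := fiberConstFst {p ∈ S | p.1 ∉ Ox} (P' \ Ox) (t' + 1)
    (fun p hp => ⟨hp.1.1, hp.2⟩)
    (fun u hu => by
      have heq : {y | (u, y) ∈ {p : P × P | p ∈ S ∧ p.1 ∉ Ox}}
          = {y | y ∈ Ox ∧ Collinear I u y} := by
        ext y
        simp only [hS, Set.mem_setOf_eq]
        exact ⟨fun h => ⟨h.1.2.1, h.1.2.2⟩, fun h => ⟨⟨hu.1, h.1, h.2⟩, hu.2⟩⟩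
      rw [heq]
      exact kval_P' hGQ hSubGQ hSubOrd ht'2 hFull hx₀ hu.1 hu.2)
  have hsplit : S.ncard = {p ∈ S | p.1 ∈ Ox}.ncard + {p ∈ S | p.1 ∉ Ox}.ncard := by
    rw [← Set.ncard_union_eq (by
        rw [Set.disjoint_left]; rintro p ⟨-, h1⟩ ⟨-, h2⟩; exact h2 h1)
      (Set.toFinite _) (Set.toFinite _)]
    congr 1
    ext p
    simp only [Set.mem_sep_iff, Set.mem_union]
    tauto
  have hdiff : (P' \ Ox).ncard + Ox.ncard = P'.ncard :=
    Set.ncard_diff_add_ncard_of_subset hOsub (Set.toFinite _)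
  rw [P'_ncard hSubGQ hSubOrd hP'ne] at hdiff
  rw [hsnd, hIn, hOut] at hsplit
  -- solve:  A(1+s(t'+1)) = A + n₂(t'+1),  n₂ + A = (s+1)(st'+1)  ⟹  A = st'+1
  set A := Ox.ncard
  set n₂ := (P' \ Ox).ncard
  have h1 : n₂ * (t' + 1) = A * s * (t' + 1) := by
    have : A * (1 + s * (t' + 1)) = A * 1 + A * s * (t' + 1) := by ring
    rw [this, mul_one] at hsplit
    omega
  have h2 : n₂ = A * s := Nat.eq_of_mul_eq_mul_right (Nat.succ_pos t') h1
  rw [h2] at hdiff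
  have h3 : A * (s + 1) = (s + 1) * (s * t' + 1) := by
    rw [← hdiff]; ring
  have h4 : (s + 1) * A = (s + 1) * (s * t' + 1) := by rw [← h3]; ring
  exact Nat.eq_of_mul_eq_mul_left (Nat.succ_pos s) h4

/-- Every line through an external point meets `P'` in exactly one point
(when `t = s t'`). -/
lemma ext_line_meets (hGQ : IsGQ I) (hOrd : HasOrder I s t)
    (hSubGQ : IsGQ (SubIncid I P' L'))
    (hSubOrd : HasOrder (SubIncid I P' L') s t') (ht'2 : 2 ≤ t')
    (hFull : IsFull I P' L') (hP'ne : P'.Nonempty) (htst : t = s * t')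
    {x₀ : P} (hx₀ : x₀ ∉ P') {l : L} (hl : I x₀ l) :
    ∃! y, y ∈ P' ∧ I y l := by
  classical
  set Ox := subtendedOvoid I P' x₀ with hOx
  set T : Set L := {l | I x₀ l ∧ ∃ y ∈ P', I y l} with hT
  have hTcard : T.ncard = Ox.ncard := by
    refine (matchCard Ox T (fun y l => I y l) ?_ ?_).symm
    · rintro y ⟨hyP, hyc⟩
      have hyx : y ≠ x₀ := fun h => hx₀ (h ▸ hyP)
      rcases hyc with heq | ⟨n, h1, h2⟩
      · exact absurd heq.symm hyx
      refine ⟨n, ⟨⟨h1, y, hyP, h2⟩, h2⟩, ?_⟩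
      rintro n' ⟨⟨hn'1, -⟩, hn'2⟩
      exact line_unique hGQ (Ne.symm hyx) hn'1 hn'2 h1 h2
    · rintro l' ⟨hl'x, y, hyP, hyl⟩
      refine ⟨y, ⟨⟨hyP, Or.inr ⟨l', hl'x, hyl⟩⟩, hyl⟩, ?_⟩
      rintro y' ⟨⟨hy'P, -⟩, hy'l⟩
      exact ext_line_subsingleton hGQ hSubGQ hSubOrd ht'2 hFull hx₀ hl'x hy'P hyP hy'l hyl
  have hOcard : Ox.ncard = t + 1 := by
    rw [Ox_card hGQ hSubGQ hSubOrd ht'2 hFull hP'ne hx₀, htst]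
  have hLam : {l | I x₀ l}.ncard = t + 1 := hOrd.2 x₀
  have hTsub : T ⊆ {l | I x₀ l} := fun l' hl' => hl'.1
  have hTeq : T = {l | I x₀ l} := by
    apply Set.eq_of_subset_of_ncard_le hTsub ?_ (Set.toFinite _)
    rw [hLam, hTcard, hOcard]
  have hlT : l ∈ T := by rw [hTeq]; exact hl
  obtain ⟨-, y, hyP, hyl⟩ := hlT
  exact ⟨y, ⟨hyP, hyl⟩, fun y' ⟨hy'P, hy'l⟩ =>
    ext_line_subsingleton hGQ hSubGQ hSubOrd ht'2 hFull hx₀ hl hy'P hyP hy'l hyl⟩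

/-- Case-2 core: the ovoids subtended by two distinct collinear external points meet
exactly in the unique `P'`-point of their common line. -/
lemma case2_inter (hGQ : IsGQ I) (hOrd : HasOrder I s t)
    (hSubGQ : IsGQ (SubIncid I P' L'))
    (hSubOrd : HasOrder (SubIncid I P' L') s t') (ht'2 : 2 ≤ t')
    (hFull : IsFull I P' L') (hP'ne : P'.Nonempty) (htst : t = s * t')
    {u z : P} (hu : u ∉ P') (hz : z ∉ P') (hne : u ≠ z) {l : L}
    (hul : I u l) (hzl : I z l) :
    subtendedOvoid I P' u ∩ subtendedOvoid I P' z = {y | y ∈ P' ∧ I y l} ∧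
      (subtendedOvoid I P' u ∩ subtendedOvoid I P' z).ncard = 1 := by
  have hset : subtendedOvoid I P' u ∩ subtendedOvoid I P' z = {y | y ∈ P' ∧ I y l} := by
    ext y
    simp only [Set.mem_inter_iff, Set.mem_setOf_eq, subtendedOvoid]
    constructor
    · rintro ⟨⟨hyP, hyu⟩, -, hyz⟩
      refine ⟨hyP, ?_⟩
      by_contra hyl
      exact hne (proj_unique hGQ hyl hul hzl (collinear_symm hyu) (collinear_symm hyz))
    · rintro ⟨hyP, hyl⟩
      exact ⟨⟨hyP, Or.inr ⟨l, hul, hyl⟩⟩, hyP, Or.inr ⟨l, hzl, hyl⟩⟩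
  refine ⟨hset, ?_⟩
  rw [hset, Set.ncard_eq_one]
  obtain ⟨y, hy, hyu⟩ := ext_line_meets hGQ hOrd hSubGQ hSubOrd ht'2 hFull hP'ne htst hu hul
  exact ⟨y, by
    ext y'
    simp only [Set.mem_setOf_eq, Set.mem_singleton_iff]
    exact ⟨fun h => hyu y' h, fun h => h ▸ hy⟩⟩

end Sub2
section Theta

set_option linter.unusedSectionVars false
set_option linter.unusedVariables false

variable {P L : Type} [Finite P] [Finite L] {I : P → L → Prop} {P' : Set P} {L' : Set L}
  {s t t' : ℕ}

/-- The perp of a subtended ovoid is exactly the set of points subtending it. -/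
lemma perp_eq_Theta (hGQ : IsGQ I) (hOrd : HasOrder I s t)
    (hSubGQ : IsGQ (SubIncid I P' L'))
    (hSubOrd : HasOrder (SubIncid I P' L') s t') (hs : 2 ≤ s) (ht'2 : 2 ≤ t')
    (hFull : IsFull I P' L') (hP'ne : P'.Nonempty)
    {x : P} (hx : x ∉ P') :
    perpSet I (subtendedOvoid I P' x)
      = {z | z ∉ P' ∧ subtendedOvoid I P' z = subtendedOvoid I P' x} := by
  set Ox := subtendedOvoid I P' x with hOx
  have hOcard : Ox.ncard = s * t' + 1 := Ox_card hGQ hSubGQ hSubOrd ht'2 hFull hP'ne hx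
  ext w
  simp only [perpSet, Set.mem_setOf_eq]
  constructor
  · intro hperp
    have hwP : w ∉ P' := by
      intro hwP'
      by_cases hwO : w ∈ Ox
      · have h2 : 1 < Ox.ncard := by rw [hOcard]; nlinarith
        obtain ⟨y, hyO, hyw⟩ := Set.exists_ne_of_one_lt_ncard h2 w
        exact ovoid_noncoll hGQ hSubGQ hSubOrd ht'2 hFull hx hwO hyO (Ne.symm hyw)
          (hperp y hyO)
      · have := kval_P' hGQ hSubGQ hSubOrd ht'2 hFull hx hwP' hwO
        have heq : {y | y ∈ Ox ∧ Collinear I w y} = Ox := by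
          ext y
          exact ⟨fun h => h.1, fun h => ⟨h, hperp y h⟩⟩
        rw [heq, hOcard] at this
        have : 2 * t' ≤ s * t' := Nat.mul_le_mul_right t' hs
        omega
    have hsub : Ox ⊆ subtendedOvoid I P' w := fun y hy => ⟨hy.1, hperp y hy⟩
    have hle : (subtendedOvoid I P' w).ncard ≤ Ox.ncard := by
      rw [hOcard, Ox_card hGQ hSubGQ hSubOrd ht'2 hFull hP'ne hwP]
    exact ⟨hwP, (Set.eq_of_subset_of_ncard_le hsub hle (Set.toFinite _)).symm⟩
  · rintro ⟨hwP, hweq⟩ y hy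
    rw [← hweq] at hy
    exact hy.2

/-- Two distinct subtenders of the same ovoid are non-collinear. -/
lemma Theta_noncoll (hGQ : IsGQ I) (hOrd : HasOrder I s t)
    (hSubGQ : IsGQ (SubIncid I P' L'))
    (hSubOrd : HasOrder (SubIncid I P' L') s t') (hs : 2 ≤ s) (ht'2 : 2 ≤ t')
    (hFull : IsFull I P' L') (hP'ne : P'.Nonempty) (htst : t = s * t')
    {x : P} (hx : x ∉ P') {z z' : P}
    (hz : z ∉ P') (hz' : z' ∉ P')
    (hzO : subtendedOvoid I P' z = subtendedOvoid I P' x)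
    (hz'O : subtendedOvoid I P' z' = subtendedOvoid I P' x)
    (hne : z ≠ z') : ¬ Collinear I z z' := by
  rintro (h | ⟨l, h1, h2⟩)
  · exact hne h
  · obtain ⟨-, hcard⟩ := case2_inter hGQ hOrd hSubGQ hSubOrd ht'2 hFull hP'ne htst
      hz hz' hne h1 h2
    rw [hzO, hz'O, Set.inter_self,
      Ox_card hGQ hSubGQ hSubOrd ht'2 hFull hP'ne hx] at hcard
    nlinarith

/-- An external point not subtending `O_x` is collinear with at most one subtender. -/
lemma theta_unique_nbr (hGQ : IsGQ I) (hOrd : HasOrder I s t)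
    (hSubGQ : IsGQ (SubIncid I P' L'))
    (hSubOrd : HasOrder (SubIncid I P' L') s t') (hs : 2 ≤ s) (ht'2 : 2 ≤ t')
    (hFull : IsFull I P' L') (hP'ne : P'.Nonempty) (htst : t = s * t')
    {x : P} (hx : x ∉ P') {u z z' : P}
    (hu : u ∉ P') (huO : subtendedOvoid I P' u ≠ subtendedOvoid I P' x)
    (hz : z ∉ P') (hzO : subtendedOvoid I P' z = subtendedOvoid I P' x)
    (hz' : z' ∉ P') (hz'O : subtendedOvoid I P' z' = subtendedOvoid I P' x)
    (huz : Collinear I u z) (huz' : Collinear I u z') : z = z' := by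
  have huz₀ : u ≠ z := by rintro rfl; exact huO hzO
  have huz'₀ : u ≠ z' := by rintro rfl; exact huO hz'O
  obtain ⟨l, hul, hzl⟩ : ∃ l, I u l ∧ I z l := by
    rcases huz with h | h
    · exact absurd h huz₀
    · exact h
  obtain ⟨l', hul', hz'l'⟩ : ∃ l', I u l' ∧ I z' l' := by
    rcases huz' with h | h
    · exact absurd h huz'₀
    · exact h
  obtain ⟨hset, -⟩ := case2_inter hGQ hOrd hSubGQ hSubOrd ht'2 hFull hP'ne htst
    hu hz huz₀ hul hzl
  obtain ⟨hset', -⟩ := case2_inter hGQ hOrd hSubGQ hSubOrd ht'2 hFull hP'ne htst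
    hu hz' huz'₀ hul' hz'l'
  rw [hzO] at hset
  rw [hz'O] at hset'
  have hsets : {y | y ∈ P' ∧ I y l} = {y | y ∈ P' ∧ I y l'} := by
    rw [← hset, ← hset']
  obtain ⟨p, ⟨hpP, hpl⟩, -⟩ :=
    ext_line_meets hGQ hOrd hSubGQ hSubOrd ht'2 hFull hP'ne htst hu hul
  have hpl' : I p l' := by
    have : p ∈ {y | y ∈ P' ∧ I y l'} := by rw [← hsets]; exact ⟨hpP, hpl⟩
    exact this.2
  have hpu : p ≠ u := by rintro rfl; exact hu hpP
  have hll' : l = l' := line_unique hGQ hpu hpl hul hpl' hul'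
  by_contra hne
  exact Theta_noncoll hGQ hOrd hSubGQ hSubOrd hs ht'2 hFull hP'ne htst hx
    hz hz' hzO hz'O hne (Or.inr ⟨l, hzl, hll' ▸ hz'l'⟩)

/-- Fiber value for points of the ovoid itself. -/
lemma kval_Ox (hGQ : IsGQ I) (hSubGQ : IsGQ (SubIncid I P' L'))
    (hSubOrd : HasOrder (SubIncid I P' L') s t') (ht'2 : 2 ≤ t')
    (hFull : IsFull I P' L') {x : P} (hx : x ∉ P')
    {u : P} (hu : u ∈ subtendedOvoid I P' x) :
    {y | y ∈ subtendedOvoid I P' x ∧ Collinear I u y} = {u} := by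
  ext y
  simp only [Set.mem_setOf_eq, Set.mem_singleton_iff]
  constructor
  · rintro ⟨h1, h2⟩
    by_contra hne
    exact ovoid_noncoll hGQ hSubGQ hSubOrd ht'2 hFull hx hu h1 (fun h => hne h.symm) h2
  · rintro rfl
    exact ⟨hu, collinear_refl I _⟩

/-- Fiber value for points of class `C`. -/
lemma kval_C (hGQ : IsGQ I) (hOrd : HasOrder I s t)
    (hSubGQ : IsGQ (SubIncid I P' L'))
    (hSubOrd : HasOrder (SubIncid I P' L') s t') (ht'2 : 2 ≤ t')
    (hFull : IsFull I P' L') (hP'ne : P'.Nonempty) (htst : t = s * t')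
    {x : P} (hx : x ∉ P') {u z : P}
    (hu : u ∉ P') (huO : subtendedOvoid I P' u ≠ subtendedOvoid I P' x)
    (hz : z ∉ P') (hzO : subtendedOvoid I P' z = subtendedOvoid I P' x)
    (huz : Collinear I u z) :
    {y | y ∈ subtendedOvoid I P' x ∧ Collinear I u y}.ncard = 1 := by
  have huz₀ : u ≠ z := by rintro rfl; exact huO hzO
  obtain ⟨l, hul, hzl⟩ : ∃ l, I u l ∧ I z l := by
    rcases huz with h | h
    · exact absurd h huz₀
    · exact h
  obtain ⟨hset, hcard⟩ := case2_inter hGQ hOrd hSubGQ hSubOrd ht'2 hFull hP'ne htst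
    hu hz huz₀ hul hzl
  have heq : {y | y ∈ subtendedOvoid I P' x ∧ Collinear I u y}
      = subtendedOvoid I P' u ∩ subtendedOvoid I P' z := by
    rw [hzO]
    ext y
    simp only [Set.mem_setOf_eq, Set.mem_inter_iff, subtendedOvoid]
    exact ⟨fun h => ⟨⟨h.1.1, h.2⟩, h.1⟩, fun h => ⟨h.2, h.1.2⟩⟩
  rw [heq, hcard]

end Theta
section MoreCounting

variable {α β : Type}

open scoped Classical in
lemma fiberSumFst [Finite α] [Finite β] (S : Set (α × β)) (A : Finset α)
    (h : ∀ p ∈ S, p.1 ∈ A) :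
    S.ncard = ∑ a ∈ A, {b | (a, b) ∈ S}.ncard := by
  have hswap : S.ncard = (Prod.swap '' S).ncard :=
    (Set.ncard_image_of_injective _ Prod.swap_injective).symm
  rw [hswap, fiberSumSnd (Prod.swap '' S) A (by rintro p ⟨q, hq, rfl⟩; exact h q hq)]
  refine Finset.sum_congr rfl fun a _ => ?_
  congr 1
  ext b
  simp only [Set.mem_setOf_eq, Set.mem_image]
  constructor
  · rintro ⟨q, hq, heq⟩
    have : q = (a, b) := by have := congrArg Prod.swap heq; simpa using this
    cases this; exact hq
  · intro hb; exact ⟨(a, b), hb, rfl⟩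

/-- Cardinality of the set of ordered pairs of distinct elements. -/
lemma odCard [Finite α] (X : Set α) :
    {p : α × α | p.1 ∈ X ∧ p.2 ∈ X ∧ p.1 ≠ p.2}.ncard = X.ncard * (X.ncard - 1) := by
  refine fiberConstFst _ X (X.ncard - 1) (fun p hp => hp.1) (fun a ha => ?_)
  have : {b | (a, b) ∈ {p : α × α | p.1 ∈ X ∧ p.2 ∈ X ∧ p.1 ≠ p.2}} = X \ {a} := by
    ext b
    simp only [Set.mem_setOf_eq, Set.mem_diff, Set.mem_singleton_iff]
    constructor
    · rintro ⟨h1, h2, h3⟩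
      exact ⟨h2, fun hb => h3 hb.symm⟩
    · rintro ⟨h1, h2⟩
      exact ⟨ha, h1, fun hab => h2 hab.symm⟩
  rw [this, Set.ncard_diff_singleton_of_mem ha]

lemma ncard_union5 (A B C D E : Set α) [Finite α]
    (hAB : Disjoint A B) (hAC : Disjoint A C) (hAD : Disjoint A D) (hAE : Disjoint A E)
    (hBC : Disjoint B C) (hBD : Disjoint B D) (hBE : Disjoint B E)
    (hCD : Disjoint C D) (hCE : Disjoint C E) (hDE : Disjoint D E) :
    (A ∪ B ∪ C ∪ D ∪ E).ncard
      = A.ncard + B.ncard + C.ncard + D.ncard + E.ncard := by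
  rw [Set.ncard_union_eq (by
      simp only [Set.disjoint_union_left]
      exact ⟨⟨⟨hAE, hBE⟩, hCE⟩, hDE⟩) (Set.toFinite _) (Set.toFinite _),
    Set.ncard_union_eq (by
      simp only [Set.disjoint_union_left]
      exact ⟨⟨hAD, hBD⟩, hCD⟩) (Set.toFinite _) (Set.toFinite _),
    Set.ncard_union_eq (by
      simp only [Set.disjoint_union_left]
      exact ⟨hAC, hBC⟩) (Set.toFinite _) (Set.toFinite _),
    Set.ncard_union_eq hAB (Set.toFinite _) (Set.toFinite _)]

lemma cast_mul_pred (n : ℕ) : ((n * (n - 1) : ℕ) : ℤ) = (n : ℤ) * ((n : ℤ) - 1) := by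
  cases n with
  | zero => simp
  | succ m => push_cast [Nat.succ_sub_one]; ring

end MoreCounting

/-- intersection numbers of subtended ovoids, under
`t' ≠ 1`, `t = s·t'`, `(θ−1)·t = s²`, every subtended ovoid θ-subtended, `θ > 1`. -/
theorem statement13 {P L : Type} [Finite P] [Finite L]
    (I : P → L → Prop) (P' : Set P) (L' : Set L) (s t t' θ : ℕ)
    (hGQ : IsGQ I) (hOrd : HasOrder I s t) (hs : 2 ≤ s)
    (hSubGQ : IsGQ (SubIncid I P' L'))
    (hSubOrd : HasOrder (SubIncid I P' L') s t')
    (hFull : IsFull I P' L')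
    (hProper : P' ≠ Set.univ ∨ L' ≠ Set.univ)
    (ht' : t' ≠ 1) (htst : t = s * t') (hθt : (θ - 1) * t = s ^ 2) (hθ : 1 < θ)
    (hθsub : AllThetaSubtended I P' θ)
    (x x' : P) (hx : x ∉ P') (hx' : x' ∉ P') :
    ((∀ z ∈ perpSet I (subtendedOvoid I P' x), ¬ Collinear I x' z) →
      (subtendedOvoid I P' x ∩ subtendedOvoid I P' x').ncard = t / s + 1) ∧
    (x' ∉ perpSet I (subtendedOvoid I P' x) →
      (∃ z ∈ perpSet I (subtendedOvoid I P' x), Collinear I x' z) →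
      (subtendedOvoid I P' x ∩ subtendedOvoid I P' x').ncard = 1) := by
  classical
  by_cases hP'e : P' = ∅
  · have hperp : x' ∈ perpSet I (subtendedOvoid I P' x) := by
      intro y hy
      rw [hP'e] at hy
      exact absurd hy.1 (Set.notMem_empty y)
    constructor
    · intro h1
      exact absurd (collinear_refl I x') (h1 x' hperp)
    · intro h2 _
      exact absurd hperp h2
  have hP'ne : P'.Nonempty := Set.nonempty_iff_ne_empty.mpr hP'e
  have hs0 : 0 < s := by omega
  have ht'0 : t' ≠ 0 := by
    rintro rfl
    rw [mul_zero] at htst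
    rw [htst, mul_zero] at hθt
    nlinarith [hθt]
  have ht'2 : 2 ≤ t' := by omega
  obtain ⟨θ₁, rfl⟩ : ∃ θ₁, θ = θ₁ + 1 := ⟨θ - 1, by omega⟩
  subst htst
  have hθt' : θ₁ * (s * t') = s ^ 2 := by simpa using hθt
  have hst : θ₁ * t' = s := by
    have hkey : s * (θ₁ * t') = s * s := by
      rw [pow_two] at hθt'; rw [← hθt']; ring
    exact Nat.eq_of_mul_eq_mul_left hs0 hkey
  obtain ⟨s₂, hs₂⟩ : ∃ s₂, s = s₂ + 1 := ⟨s - 1, by omega⟩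
  set Ox := subtendedOvoid I P' x with hOxdef
  set Θ : Set P := {z | z ∉ P' ∧ subtendedOvoid I P' z = Ox} with hΘdef
  have hperpΘ : perpSet I Ox = Θ := by
    rw [hΘdef, hOxdef]
    exact perp_eq_Theta hGQ hOrd hSubGQ hSubOrd hs ht'2 hFull hP'ne hx
  have hΘcard : Θ.ncard = θ₁ + 1 := by
    rw [hΘdef, hOxdef]
    exact hθsub x hx
  have hOxc : Ox.ncard = s * t' + 1 := by
    rw [hOxdef]
    exact Ox_card hGQ hSubGQ hSubOrd ht'2 hFull hP'ne hx
  have hOxP' : Ox ⊆ P' := fun y hy => hy.1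
  have hnotΘ : ∀ u : P, u ∉ P' → u ∉ Θ → subtendedOvoid I P' u ≠ Ox := by
    intro u hu huΘ heq
    exact huΘ ⟨hu, heq⟩
  have hxΘ : x ∈ Θ := ⟨hx, rfl⟩
  -- fiber value wrappers
  have kOx : ∀ {u : P}, u ∈ Ox → {y | y ∈ Ox ∧ Collinear I u y} = {u} := by
    intro u hu
    rw [hOxdef] at hu ⊢
    exact kval_Ox hGQ hSubGQ hSubOrd ht'2 hFull hx hu
  have kP' : ∀ {u : P}, u ∈ P' → u ∉ Ox →
      {y | y ∈ Ox ∧ Collinear I u y}.ncard = t' + 1 := by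
    intro u hu hu'
    rw [hOxdef] at hu' ⊢
    exact kval_P' hGQ hSubGQ hSubOrd ht'2 hFull hx hu hu'
  have kΘ : ∀ {u : P}, u ∈ Θ → {y | y ∈ Ox ∧ Collinear I u y} = Ox := by
    intro u hu
    ext y
    simp only [Set.mem_setOf_eq]
    refine ⟨fun h => h.1, fun hy => ⟨hy, ?_⟩⟩
    have : y ∈ subtendedOvoid I P' u := by rw [hu.2]; exact hy
    exact this.2
  have kC : ∀ {u : P}, u ∉ P' → u ∉ Θ → (∃ z ∈ Θ, Collinear I u z) →
      {y | y ∈ Ox ∧ Collinear I u y}.ncard = 1 := by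
    rintro u hu huΘ ⟨z, hzΘ, huz⟩
    rw [hOxdef]
    exact kval_C hGQ hOrd hSubGQ hSubOrd ht'2 hFull hP'ne rfl hx hu
      (hnotΘ u hu huΘ) hzΘ.1 hzΘ.2 huz
  -- Part 2
  have part2 : x' ∉ perpSet I Ox → (∃ z ∈ perpSet I Ox, Collinear I x' z) →
      (Ox ∩ subtendedOvoid I P' x').ncard = 1 := by
    intro h2a h2b
    rw [hperpΘ] at h2a h2b
    obtain ⟨z, hzΘ, hx'z⟩ := h2b
    have hO1 : Ox ∩ subtendedOvoid I P' x' = {y | y ∈ Ox ∧ Collinear I x' y} := by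
      ext y
      simp only [Set.mem_inter_iff, Set.mem_setOf_eq]
      exact ⟨fun h => ⟨h.1, h.2.2⟩, fun h => ⟨h.1, hOxP' h.1, h.2⟩⟩
    rw [hO1]
    exact kC hx' h2a ⟨z, hzΘ, hx'z⟩
  refine ⟨?_, part2⟩
  -- Part 1
  intro h1
  rw [hperpΘ] at h1
  set C : Set P := {u | u ∉ P' ∧ u ∉ Θ ∧ ∃ z ∈ Θ, Collinear I u z} with hCdef
  set F : Set P := {u | u ∉ P' ∧ ∀ z ∈ Θ, ¬ Collinear I u z} with hFdef
  have hx'F : x' ∈ F := ⟨hx', h1⟩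
  have hPcard : (Set.univ : Set P).ncard = (s + 1) * (s * (s * t') + 1) :=
    g_point_count hGQ hOrd ⟨x⟩
  have hP'card : P'.ncard = (s + 1) * (s * t' + 1) :=
    P'_ncard hSubGQ hSubOrd hP'ne
  have hn2 : (P' \ Ox).ncard + (s * t' + 1) = (s + 1) * (s * t' + 1) := by
    have h0 := Set.ncard_diff_add_ncard_of_subset hOxP' (Set.toFinite P')
    rw [hOxc, hP'card] at h0
    exact h0
  -- fibers over Θ for the C-count
  have hΘfiber : ∀ z ∈ Θ, {u | u ∈ C ∧ Collinear I u z}.ncard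
      = s₂ * (s * t' + 1) := by
    intro z hz
    have hzO := hz.2
    have hperpz : {w | Collinear I z w}.ncard = 1 + s * (s * t' + 1) :=
      g_perp_card hGQ hOrd z
    have hsplit : {w | Collinear I z w}
        = Ox ∪ {z} ∪ {u | u ∈ C ∧ Collinear I u z} := by
      ext w
      simp only [Set.mem_setOf_eq, Set.mem_union, Set.mem_singleton_iff]
      constructor
      · intro hw
        by_cases hwP : w ∈ P'
        · left; left
          have : w ∈ subtendedOvoid I P' z := ⟨hwP, hw⟩
          rw [hzO] at this; exact this
        · by_cases hwΘ : w ∈ Θ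
          · left; right
            by_contra hne
            exact Theta_noncoll hGQ hOrd hSubGQ hSubOrd hs ht'2 hFull hP'ne rfl hx
              hz.1 hwΘ.1 hzO hwΘ.2 (fun h => hne h.symm) hw
          · right
            exact ⟨⟨hwP, hwΘ, z, hz, collinear_symm hw⟩, collinear_symm hw⟩
      · rintro ((hw | rfl) | hw)
        · have : w ∈ subtendedOvoid I P' z := by rw [hzO]; exact hw
          exact this.2
        · exact collinear_refl I _
        · exact collinear_symm hw.2
    have hd1 : Disjoint (Ox ∪ {z}) {u | u ∈ C ∧ Collinear I u z} := by
      rw [Set.disjoint_left]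
      rintro w (hw | rfl) ⟨hwC, -⟩
      · exact hwC.1 (hOxP' hw)
      · exact hwC.2.1 hz
    have hd2 : Disjoint Ox ({z} : Set P) := by
      rw [Set.disjoint_left]
      rintro w hw rfl
      exact hz.1 (hOxP' hw)
    rw [hsplit, Set.ncard_union_eq hd1 (Set.toFinite _) (Set.toFinite _),
      Set.ncard_union_eq hd2 (Set.toFinite _) (Set.toFinite _),
      hOxc, Set.ncard_singleton] at hperpz
    have hsexp : s * (s * t' + 1) = s₂ * (s * t' + 1) + (s * t' + 1) := by
      rw [hs₂]; ring
    omega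
  have hCcard : C.ncard = (θ₁ + 1) * (s₂ * (s * t' + 1)) := by
    have h1' := fiberConstFst {p : P × P | p.1 ∈ C ∧ p.2 ∈ Θ ∧ Collinear I p.1 p.2}
      C 1 (fun p hp => hp.1)
      (fun u hu => by
        obtain ⟨huP, huΘ, z, hzΘ, huz⟩ := hu
        rw [Set.ncard_eq_one]
        refine ⟨z, ?_⟩
        ext z'
        simp only [Set.mem_setOf_eq, Set.mem_singleton_iff]
        constructor
        · rintro ⟨-, hz'Θ, huz'⟩
          exact theta_unique_nbr hGQ hOrd hSubGQ hSubOrd hs ht'2 hFull hP'ne rfl hx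
            huP (hnotΘ u huP huΘ) hz'Θ.1 hz'Θ.2 hzΘ.1 hzΘ.2 huz' huz
        · rintro rfl
          exact ⟨⟨huP, huΘ, _, hzΘ, huz⟩, hzΘ, huz⟩)
    have h2' := fiberConstSnd {p : P × P | p.1 ∈ C ∧ p.2 ∈ Θ ∧ Collinear I p.1 p.2}
      Θ (s₂ * (s * t' + 1)) (fun p hp => hp.2.1)
      (fun z hz => by
        have heq : {u | (u, z) ∈ {p : P × P | p.1 ∈ C ∧ p.2 ∈ Θ ∧ Collinear I p.1 p.2}}
            = {u | u ∈ C ∧ Collinear I u z} := by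
          ext u
          simp only [Set.mem_setOf_eq]
          exact ⟨fun h => ⟨h.1, h.2.2⟩, fun h => ⟨h.1, hz, h.2⟩⟩
        rw [heq]
        exact hΘfiber z hz)
    rw [h2', hΘcard] at h1'
    omega
  -- the five classes partition the point set
  have hclass : ∀ u : P, u ∈ Ox ∨ u ∈ P' \ Ox ∨ u ∈ Θ ∨ u ∈ C ∨ u ∈ F := by
    intro u
    by_cases huP : u ∈ P'
    · by_cases huO : u ∈ Ox
      · exact Or.inl huO
      · exact Or.inr (Or.inl ⟨huP, huO⟩)
    · by_cases huΘ : u ∈ Θ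
      · exact Or.inr (Or.inr (Or.inl huΘ))
      · by_cases huC : ∃ z ∈ Θ, Collinear I u z
        · exact Or.inr (Or.inr (Or.inr (Or.inl ⟨huP, huΘ, huC⟩)))
        · push_neg at huC
          exact Or.inr (Or.inr (Or.inr (Or.inr ⟨huP, huC⟩)))
  have hcover : (Set.univ : Set P) = Ox ∪ (P' \ Ox) ∪ Θ ∪ C ∪ F := by
    ext u
    simp only [Set.mem_univ, true_iff, Set.mem_union]
    rcases hclass u with h | h | h | h | h
    · exact Or.inl (Or.inl (Or.inl (Or.inl h)))
    · exact Or.inl (Or.inl (Or.inl (Or.inr h)))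
    · exact Or.inl (Or.inl (Or.inr h))
    · exact Or.inl (Or.inr h)
    · exact Or.inr h
  have hdOxP : Disjoint Ox (P' \ Ox) := by
    rw [Set.disjoint_left]; exact fun u hu hu' => hu'.2 hu
  have hdOxΘ : Disjoint Ox Θ := by
    rw [Set.disjoint_left]; exact fun u hu hu' => hu'.1 (hOxP' hu)
  have hdOxC : Disjoint Ox C := by
    rw [Set.disjoint_left]; exact fun u hu hu' => hu'.1 (hOxP' hu)
  have hdOxF : Disjoint Ox F := by
    rw [Set.disjoint_left]; exact fun u hu hu' => hu'.1 (hOxP' hu)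
  have hdPΘ : Disjoint (P' \ Ox) Θ := by
    rw [Set.disjoint_left]; exact fun u hu hu' => hu'.1 hu.1
  have hdPC : Disjoint (P' \ Ox) C := by
    rw [Set.disjoint_left]; exact fun u hu hu' => hu'.1 hu.1
  have hdPF : Disjoint (P' \ Ox) F := by
    rw [Set.disjoint_left]; exact fun u hu hu' => hu'.1 hu.1
  have hdΘC : Disjoint Θ C := by
    rw [Set.disjoint_left]; exact fun u hu hu' => hu'.2.1 hu
  have hdΘF : Disjoint Θ F := by
    rw [Set.disjoint_left]
    exact fun u hu hu' => hu'.2 u hu (collinear_refl I u)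
  have hdCF : Disjoint C F := by
    rw [Set.disjoint_left]
    rintro u ⟨-, -, z, hz, huz⟩ hu'
    exact hu'.2 z hz huz
  -- E3 : total point count
  have hE3 : (s * t' + 1) + (P' \ Ox).ncard + (θ₁ + 1) + C.ncard + F.ncard
      = (s + 1) * (s * (s * t') + 1) := by
    rw [← hOxc, ← hΘcard, ← hPcard, hcover,
      ncard_union5 _ _ _ _ _ hdOxP hdOxΘ hdOxC hdOxF hdPΘ hdPC hdPF hdΘC hdΘF hdCF]
  -- E1 : count of flags (u, y) with y ∈ Ox collinear with u
  have hS1total : {p : P × P | p.2 ∈ Ox ∧ Collinear I p.1 p.2}.ncard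
      = Ox.ncard * (1 + s * (s * t' + 1)) :=
    fiberConstSnd _ Ox (1 + s * (s * t' + 1)) (fun p hp => hp.1)
      (fun y hy => by
        have heq : {u | (u, y) ∈ {p : P × P | p.2 ∈ Ox ∧ Collinear I p.1 p.2}}
            = {w | Collinear I y w} := by
          ext u
          simp only [Set.mem_setOf_eq]
          exact ⟨fun h => collinear_symm h.2, fun h => ⟨hy, collinear_symm h⟩⟩
        rw [heq]
        exact g_perp_card hGQ hOrd y)
  have hS1split : {p : P × P | p.2 ∈ Ox ∧ Collinear I p.1 p.2}
      = {p : P × P | p.1 ∈ Ox ∧ p.2 ∈ Ox ∧ Collinear I p.1 p.2} ∪ {p : P × P | p.1 ∈ (P' \ Ox) ∧ p.2 ∈ Ox ∧ Collinear I p.1 p.2} ∪ {p : P × P | p.1 ∈ Θ ∧ p.2 ∈ Ox ∧ Collinear I p.1 p.2} ∪ {p : P × P | p.1 ∈ C ∧ p.2 ∈ Ox ∧ Collinear I p.1 p.2} ∪ {p : P × P | p.1 ∈ F ∧ p.2 ∈ Ox ∧ Collinear I p.1 p.2} := by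
    ext p
    simp only [Set.mem_setOf_eq, Set.mem_union]
    constructor
    · rintro ⟨h2, h3⟩
      rcases hclass p.1 with h | h | h | h | h
      · exact Or.inl (Or.inl (Or.inl (Or.inl ⟨h, h2, h3⟩)))
      · exact Or.inl (Or.inl (Or.inl (Or.inr ⟨h, h2, h3⟩)))
      · exact Or.inl (Or.inl (Or.inr ⟨h, h2, h3⟩))
      · exact Or.inl (Or.inr ⟨h, h2, h3⟩)
      · exact Or.inr ⟨h, h2, h3⟩
    · rintro ((((⟨-, h2, h3⟩ | ⟨-, h2, h3⟩) | ⟨-, h2, h3⟩) | ⟨-, h2, h3⟩) | ⟨-, h2, h3⟩) <;>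
        exact ⟨h2, h3⟩
  have hS1a : {p : P × P | p.1 ∈ Ox ∧ p.2 ∈ Ox ∧ Collinear I p.1 p.2}.ncard = Ox.ncard * 1 :=
    fiberConstFst _ Ox 1 (fun p hp => hp.1)
      (fun u hu => by
        have heq : {y | (u, y) ∈ {p : P × P | p.1 ∈ Ox ∧ p.2 ∈ Ox ∧ Collinear I p.1 p.2}}
            = {y | y ∈ Ox ∧ Collinear I u y} := by
          ext y
          simp only [Set.mem_setOf_eq]
          exact ⟨fun h => ⟨h.2.1, h.2.2⟩, fun h => ⟨hu, h.1, h.2⟩⟩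
        rw [heq]
        rw [kOx hu, Set.ncard_singleton])
  have hS1b : {p : P × P | p.1 ∈ (P' \ Ox) ∧ p.2 ∈ Ox ∧ Collinear I p.1 p.2}.ncard = (P' \ Ox).ncard * (t' + 1) :=
    fiberConstFst _ (P' \ Ox) (t' + 1) (fun p hp => hp.1)
      (fun u hu => by
        have heq : {y | (u, y) ∈ {p : P × P | p.1 ∈ (P' \ Ox) ∧ p.2 ∈ Ox ∧ Collinear I p.1 p.2}}
            = {y | y ∈ Ox ∧ Collinear I u y} := by
          ext y
          simp only [Set.mem_setOf_eq]
          exact ⟨fun h => ⟨h.2.1, h.2.2⟩, fun h => ⟨hu, h.1, h.2⟩⟩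
        rw [heq]
        exact kP' hu.1 hu.2)
  have hS1c : {p : P × P | p.1 ∈ Θ ∧ p.2 ∈ Ox ∧ Collinear I p.1 p.2}.ncard = Θ.ncard * (s * t' + 1) :=
    fiberConstFst _ Θ (s * t' + 1) (fun p hp => hp.1)
      (fun u hu => by
        have heq : {y | (u, y) ∈ {p : P × P | p.1 ∈ Θ ∧ p.2 ∈ Ox ∧ Collinear I p.1 p.2}}
            = {y | y ∈ Ox ∧ Collinear I u y} := by
          ext y
          simp only [Set.mem_setOf_eq]
          exact ⟨fun h => ⟨h.2.1, h.2.2⟩, fun h => ⟨hu, h.1, h.2⟩⟩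
        rw [heq]
        rw [kΘ hu]
        exact hOxc)
  have hS1d : {p : P × P | p.1 ∈ C ∧ p.2 ∈ Ox ∧ Collinear I p.1 p.2}.ncard = C.ncard * 1 :=
    fiberConstFst _ C 1 (fun p hp => hp.1)
      (fun u hu => by
        have heq : {y | (u, y) ∈ {p : P × P | p.1 ∈ C ∧ p.2 ∈ Ox ∧ Collinear I p.1 p.2}}
            = {y | y ∈ Ox ∧ Collinear I u y} := by
          ext y
          simp only [Set.mem_setOf_eq]
          exact ⟨fun h => ⟨h.2.1, h.2.2⟩, fun h => ⟨hu, h.1, h.2⟩⟩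
        rw [heq]
        exact kC hu.1 hu.2.1 hu.2.2)
  have hE1 : (s * t' + 1) * 1 + (P' \ Ox).ncard * (t' + 1) + (θ₁ + 1) * (s * t' + 1)
      + C.ncard * 1 + {p : P × P | p.1 ∈ F ∧ p.2 ∈ Ox ∧ Collinear I p.1 p.2}.ncard
      = (s * t' + 1) * (1 + s * (s * t' + 1)) := by
    have h0 := hS1total
    rw [hS1split, ncard_union5 _ _ _ _ _
      (Set.disjoint_left.mpr fun p hp hq => Set.disjoint_left.mp hdOxP hp.1 hq.1)
      (Set.disjoint_left.mpr fun p hp hq => Set.disjoint_left.mp hdOxΘ hp.1 hq.1)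
      (Set.disjoint_left.mpr fun p hp hq => Set.disjoint_left.mp hdOxC hp.1 hq.1)
      (Set.disjoint_left.mpr fun p hp hq => Set.disjoint_left.mp hdOxF hp.1 hq.1)
      (Set.disjoint_left.mpr fun p hp hq => Set.disjoint_left.mp hdPΘ hp.1 hq.1)
      (Set.disjoint_left.mpr fun p hp hq => Set.disjoint_left.mp hdPC hp.1 hq.1)
      (Set.disjoint_left.mpr fun p hp hq => Set.disjoint_left.mp hdPF hp.1 hq.1)
      (Set.disjoint_left.mpr fun p hp hq => Set.disjoint_left.mp hdΘC hp.1 hq.1)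
      (Set.disjoint_left.mpr fun p hp hq => Set.disjoint_left.mp hdΘF hp.1 hq.1)
      (Set.disjoint_left.mpr fun p hp hq => Set.disjoint_left.mp hdCF hp.1 hq.1),
      hS1a, hS1b, hS1c, hS1d, hOxc, hΘcard] at h0
    exact h0
  -- E2 : count of flags (u, (y, y')) with y ≠ y' in Ox both collinear with u
  have hODcard : {p : P × P | p.1 ∈ Ox ∧ p.2 ∈ Ox ∧ p.1 ≠ p.2}.ncard = (s * t' + 1) * (s * t') := by
    rw [odCard Ox, hOxc]
    simp
  have hS2total : {q : P × P × P | (q.2.1 ∈ Ox ∧ q.2.2 ∈ Ox ∧ q.2.1 ≠ q.2.2)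
      ∧ Collinear I q.1 q.2.1 ∧ Collinear I q.1 q.2.2}.ncard
      = {p : P × P | p.1 ∈ Ox ∧ p.2 ∈ Ox ∧ p.1 ≠ p.2}.ncard * (s * t' + 1) :=
    fiberConstSnd _ {p : P × P | p.1 ∈ Ox ∧ p.2 ∈ Ox ∧ p.1 ≠ p.2} (s * t' + 1) (fun q hq => hq.1)
      (fun yy hyy => by
        have heq : {u | (u, yy) ∈ {q : P × P × P | (q.2.1 ∈ Ox ∧ q.2.2 ∈ Ox
            ∧ q.2.1 ≠ q.2.2) ∧ Collinear I q.1 q.2.1 ∧ Collinear I q.1 q.2.2}}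
            = {w | Collinear I yy.1 w ∧ Collinear I yy.2 w} := by
          ext u
          simp only [Set.mem_setOf_eq]
          exact ⟨fun h => ⟨collinear_symm h.2.1, collinear_symm h.2.2⟩,
            fun h => ⟨hyy, collinear_symm h.1, collinear_symm h.2⟩⟩
        rw [heq]
        refine g_trace_card hGQ hOrd ?_
        refine ovoid_noncoll hGQ hSubGQ hSubOrd ht'2 hFull hx ?_ ?_ hyy.2.2
        · rw [← hOxdef]; exact hyy.1
        · rw [← hOxdef]; exact hyy.2.1)
  have hS2split : {q : P × P × P | (q.2.1 ∈ Ox ∧ q.2.2 ∈ Ox ∧ q.2.1 ≠ q.2.2)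
      ∧ Collinear I q.1 q.2.1 ∧ Collinear I q.1 q.2.2}
      = {q : P × P × P | q.1 ∈ Ox ∧ (q.2.1 ∈ Ox ∧ q.2.2 ∈ Ox ∧ q.2.1 ≠ q.2.2) ∧ Collinear I q.1 q.2.1 ∧ Collinear I q.1 q.2.2} ∪ {q : P × P × P | q.1 ∈ (P' \ Ox) ∧ (q.2.1 ∈ Ox ∧ q.2.2 ∈ Ox ∧ q.2.1 ≠ q.2.2) ∧ Collinear I q.1 q.2.1 ∧ Collinear I q.1 q.2.2} ∪ {q : P × P × P | q.1 ∈ Θ ∧ (q.2.1 ∈ Ox ∧ q.2.2 ∈ Ox ∧ q.2.1 ≠ q.2.2) ∧ Collinear I q.1 q.2.1 ∧ Collinear I q.1 q.2.2} ∪ {q : P × P × P | q.1 ∈ C ∧ (q.2.1 ∈ Ox ∧ q.2.2 ∈ Ox ∧ q.2.1 ≠ q.2.2) ∧ Collinear I q.1 q.2.1 ∧ Collinear I q.1 q.2.2} ∪ {q : P × P × P | q.1 ∈ F ∧ (q.2.1 ∈ Ox ∧ q.2.2 ∈ Ox ∧ q.2.1 ≠ q.2.2) ∧ Collinear I q.1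 q.2.1 ∧ Collinear I q.1 q.2.2} := by
    ext q
    simp only [Set.mem_setOf_eq, Set.mem_union]
    constructor
    · rintro ⟨h2, h3⟩
      rcases hclass q.1 with h | h | h | h | h
      · exact Or.inl (Or.inl (Or.inl (Or.inl ⟨h, h2, h3⟩)))
      · exact Or.inl (Or.inl (Or.inl (Or.inr ⟨h, h2, h3⟩)))
      · exact Or.inl (Or.inl (Or.inr ⟨h, h2, h3⟩))
      · exact Or.inl (Or.inr ⟨h, h2, h3⟩)
      · exact Or.inr ⟨h, h2, h3⟩
    · rintro ((((⟨-, h2, h3⟩ | ⟨-, h2, h3⟩) | ⟨-, h2, h3⟩) | ⟨-, h2, h3⟩) | ⟨-, h2, h3⟩) <;>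
        exact ⟨h2, h3⟩
  have hS2a : {q : P × P × P | q.1 ∈ Ox ∧ (q.2.1 ∈ Ox ∧ q.2.2 ∈ Ox ∧ q.2.1 ≠ q.2.2) ∧ Collinear I q.1 q.2.1 ∧ Collinear I q.1 q.2.2}.ncard = Ox.ncard * 0 :=
    fiberConstFst _ Ox 0 (fun q hq => hq.1)
      (fun u hu => by
        have heq : {yy | (u, yy) ∈ {q : P × P × P | q.1 ∈ Ox ∧ (q.2.1 ∈ Ox ∧ q.2.2 ∈ Ox ∧ q.2.1 ≠ q.2.2) ∧ Collinear I q.1 q.2.1 ∧ Collinear I q.1 q.2.2}}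
            = {p : P × P | p.1 ∈ {y | y ∈ Ox ∧ Collinear I u y}
                ∧ p.2 ∈ {y | y ∈ Ox ∧ Collinear I u y} ∧ p.1 ≠ p.2} := by
          ext yy
          simp only [Set.mem_setOf_eq]
          constructor
          · rintro ⟨-, ⟨ha, hb, hc⟩, hd, he⟩
            exact ⟨⟨ha, hd⟩, ⟨hb, he⟩, hc⟩
          · rintro ⟨⟨ha, hd⟩, ⟨hb, he⟩, hc⟩
            exact ⟨hu, ⟨ha, hb, hc⟩, hd, he⟩
        rw [heq, odCard]
        rw [kOx hu, Set.ncard_singleton])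
  have hS2b : {q : P × P × P | q.1 ∈ (P' \ Ox) ∧ (q.2.1 ∈ Ox ∧ q.2.2 ∈ Ox ∧ q.2.1 ≠ q.2.2) ∧ Collinear I q.1 q.2.1 ∧ Collinear I q.1 q.2.2}.ncard = (P' \ Ox).ncard * ((t' + 1) * t') :=
    fiberConstFst _ (P' \ Ox) ((t' + 1) * t') (fun q hq => hq.1)
      (fun u hu => by
        have heq : {yy | (u, yy) ∈ {q : P × P × P | q.1 ∈ (P' \ Ox) ∧ (q.2.1 ∈ Ox ∧ q.2.2 ∈ Ox ∧ q.2.1 ≠ q.2.2) ∧ Collinear I q.1 q.2.1 ∧ Collinear I q.1 q.2.2}}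
            = {p : P × P | p.1 ∈ {y | y ∈ Ox ∧ Collinear I u y}
                ∧ p.2 ∈ {y | y ∈ Ox ∧ Collinear I u y} ∧ p.1 ≠ p.2} := by
          ext yy
          simp only [Set.mem_setOf_eq]
          constructor
          · rintro ⟨-, ⟨ha, hb, hc⟩, hd, he⟩
            exact ⟨⟨ha, hd⟩, ⟨hb, he⟩, hc⟩
          · rintro ⟨⟨ha, hd⟩, ⟨hb, he⟩, hc⟩
            exact ⟨hu, ⟨ha, hb, hc⟩, hd, he⟩
        rw [heq, odCard]
        rw [kP' hu.1 hu.2]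
        simp)
  have hS2c : {q : P × P × P | q.1 ∈ Θ ∧ (q.2.1 ∈ Ox ∧ q.2.2 ∈ Ox ∧ q.2.1 ≠ q.2.2) ∧ Collinear I q.1 q.2.1 ∧ Collinear I q.1 q.2.2}.ncard = Θ.ncard * ((s * t' + 1) * (s * t')) :=
    fiberConstFst _ Θ ((s * t' + 1) * (s * t')) (fun q hq => hq.1)
      (fun u hu => by
        have heq : {yy | (u, yy) ∈ {q : P × P × P | q.1 ∈ Θ ∧ (q.2.1 ∈ Ox ∧ q.2.2 ∈ Ox ∧ q.2.1 ≠ q.2.2) ∧ Collinear I q.1 q.2.1 ∧ Collinear I q.1 q.2.2}}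
            = {p : P × P | p.1 ∈ {y | y ∈ Ox ∧ Collinear I u y}
                ∧ p.2 ∈ {y | y ∈ Ox ∧ Collinear I u y} ∧ p.1 ≠ p.2} := by
          ext yy
          simp only [Set.mem_setOf_eq]
          constructor
          · rintro ⟨-, ⟨ha, hb, hc⟩, hd, he⟩
            exact ⟨⟨ha, hd⟩, ⟨hb, he⟩, hc⟩
          · rintro ⟨⟨ha, hd⟩, ⟨hb, he⟩, hc⟩
            exact ⟨hu, ⟨ha, hb, hc⟩, hd, he⟩
        rw [heq, odCard]
        rw [kΘ hu, hOxc]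
        simp)
  have hS2d : {q : P × P × P | q.1 ∈ C ∧ (q.2.1 ∈ Ox ∧ q.2.2 ∈ Ox ∧ q.2.1 ≠ q.2.2) ∧ Collinear I q.1 q.2.1 ∧ Collinear I q.1 q.2.2}.ncard = C.ncard * 0 :=
    fiberConstFst _ C 0 (fun q hq => hq.1)
      (fun u hu => by
        have heq : {yy | (u, yy) ∈ {q : P × P × P | q.1 ∈ C ∧ (q.2.1 ∈ Ox ∧ q.2.2 ∈ Ox ∧ q.2.1 ≠ q.2.2) ∧ Collinear I q.1 q.2.1 ∧ Collinear I q.1 q.2.2}}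
            = {p : P × P | p.1 ∈ {y | y ∈ Ox ∧ Collinear I u y}
                ∧ p.2 ∈ {y | y ∈ Ox ∧ Collinear I u y} ∧ p.1 ≠ p.2} := by
          ext yy
          simp only [Set.mem_setOf_eq]
          constructor
          · rintro ⟨-, ⟨ha, hb, hc⟩, hd, he⟩
            exact ⟨⟨ha, hd⟩, ⟨hb, he⟩, hc⟩
          · rintro ⟨⟨ha, hd⟩, ⟨hb, he⟩, hc⟩
            exact ⟨hu, ⟨ha, hb, hc⟩, hd, he⟩
        rw [heq, odCard]
        rw [kC hu.1 hu.2.1 hu.2.2])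
  have hE2 : (s * t' + 1) * 0 + (P' \ Ox).ncard * ((t' + 1) * t')
      + (θ₁ + 1) * ((s * t' + 1) * (s * t')) + C.ncard * 0 + {q : P × P × P | q.1 ∈ F ∧ (q.2.1 ∈ Ox ∧ q.2.2 ∈ Ox ∧ q.2.1 ≠ q.2.2) ∧ Collinear I q.1 q.2.1 ∧ Collinear I q.1 q.2.2}.ncard
      = ((s * t' + 1) * (s * t')) * (s * t' + 1) := by
    have h0 := hS2total
    rw [hS2split, ncard_union5 _ _ _ _ _
      (Set.disjoint_left.mpr fun q hq hr => Set.disjoint_left.mp hdOxP hq.1 hr.1)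
      (Set.disjoint_left.mpr fun q hq hr => Set.disjoint_left.mp hdOxΘ hq.1 hr.1)
      (Set.disjoint_left.mpr fun q hq hr => Set.disjoint_left.mp hdOxC hq.1 hr.1)
      (Set.disjoint_left.mpr fun q hq hr => Set.disjoint_left.mp hdOxF hq.1 hr.1)
      (Set.disjoint_left.mpr fun q hq hr => Set.disjoint_left.mp hdPΘ hq.1 hr.1)
      (Set.disjoint_left.mpr fun q hq hr => Set.disjoint_left.mp hdPC hq.1 hr.1)
      (Set.disjoint_left.mpr fun q hq hr => Set.disjoint_left.mp hdPF hq.1 hr.1)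
      (Set.disjoint_left.mpr fun q hq hr => Set.disjoint_left.mp hdΘC hq.1 hr.1)
      (Set.disjoint_left.mpr fun q hq hr => Set.disjoint_left.mp hdΘF hq.1 hr.1)
      (Set.disjoint_left.mpr fun q hq hr => Set.disjoint_left.mp hdCF hq.1 hr.1),
      hS2a, hS2b, hS2c, hS2d, hODcard, hOxc, hΘcard] at h0
    exact h0
  -- sums over the free class
  set k : P → ℕ := fun u => {y | y ∈ Ox ∧ Collinear I u y}.ncard with hkdef
  set Ffin : Finset P := (Set.toFinite F).toFinset with hFfin
  have hn5 : F.ncard = Ffin.card := Set.ncard_eq_toFinset_card F (Set.toFinite F)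
  have ha_sum : {p : P × P | p.1 ∈ F ∧ p.2 ∈ Ox ∧ Collinear I p.1 p.2}.ncard = ∑ u ∈ Ffin, k u := by
    rw [fiberSumFst _ Ffin (fun p hp => (Set.Finite.mem_toFinset _).mpr hp.1)]
    refine Finset.sum_congr rfl fun u hu => ?_
    have huF : u ∈ F := (Set.Finite.mem_toFinset _).mp hu
    have heq : {y | (u, y) ∈ {p : P × P | p.1 ∈ F ∧ p.2 ∈ Ox ∧ Collinear I p.1 p.2}} = {y | y ∈ Ox ∧ Collinear I u y} := by
      ext y
      simp only [Set.mem_setOf_eq]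
      exact ⟨fun h => ⟨h.2.1, h.2.2⟩, fun h => ⟨huF, h.1, h.2⟩⟩
    rw [heq]
  have hb_sum : {q : P × P × P | q.1 ∈ F ∧ (q.2.1 ∈ Ox ∧ q.2.2 ∈ Ox ∧ q.2.1 ≠ q.2.2) ∧ Collinear I q.1 q.2.1 ∧ Collinear I q.1 q.2.2}.ncard = ∑ u ∈ Ffin, k u * (k u - 1) := by
    rw [fiberSumFst _ Ffin (fun q hq => (Set.Finite.mem_toFinset _).mpr hq.1)]
    refine Finset.sum_congr rfl fun u hu => ?_
    have huF : u ∈ F := (Set.Finite.mem_toFinset _).mp hu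
    have heq : {yy | (u, yy) ∈ {q : P × P × P | q.1 ∈ F ∧ (q.2.1 ∈ Ox ∧ q.2.2 ∈ Ox ∧ q.2.1 ≠ q.2.2) ∧ Collinear I q.1 q.2.1 ∧ Collinear I q.1 q.2.2}}
        = {p : P × P | p.1 ∈ {y | y ∈ Ox ∧ Collinear I u y}
            ∧ p.2 ∈ {y | y ∈ Ox ∧ Collinear I u y} ∧ p.1 ≠ p.2} := by
      ext yy
      simp only [Set.mem_setOf_eq]
      constructor
      · rintro ⟨-, ⟨ha, hb, hc⟩, hd, he⟩
        exact ⟨⟨ha, hd⟩, ⟨hb, he⟩, hc⟩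
      · rintro ⟨⟨ha, hd⟩, ⟨hb, he⟩, hc⟩
        exact ⟨huF, ⟨ha, hb, hc⟩, hd, he⟩
    rw [heq, odCard]
  -- cast the three counting identities to ℤ
  have hE1z : ((s : ℤ) * t' + 1) * 1 + ((P' \ Ox).ncard : ℤ) * ((t' : ℤ) + 1)
      + ((θ₁ : ℤ) + 1) * ((s : ℤ) * t' + 1) + (C.ncard : ℤ) * 1 + ({p : P × P | p.1 ∈ F ∧ p.2 ∈ Ox ∧ Collinear I p.1 p.2}.ncard : ℤ)
      = ((s : ℤ) * t' + 1) * (1 + (s : ℤ) * ((s : ℤ) * t' + 1)) := by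
    exact_mod_cast hE1
  have hE2z : ((s : ℤ) * t' + 1) * 0 + ((P' \ Ox).ncard : ℤ) * (((t' : ℤ) + 1) * t')
      + ((θ₁ : ℤ) + 1) * (((s : ℤ) * t' + 1) * ((s : ℤ) * t')) + (C.ncard : ℤ) * 0
      + ({q : P × P × P | q.1 ∈ F ∧ (q.2.1 ∈ Ox ∧ q.2.2 ∈ Ox ∧ q.2.1 ≠ q.2.2) ∧ Collinear I q.1 q.2.1 ∧ Collinear I q.1 q.2.2}.ncard : ℤ)
      = (((s : ℤ) * t' + 1) * ((s : ℤ) * t')) * ((s : ℤ) * t' + 1) := by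
    exact_mod_cast hE2
  have hE3z : ((s : ℤ) * t' + 1) + ((P' \ Ox).ncard : ℤ) + ((θ₁ : ℤ) + 1)
      + (C.ncard : ℤ) + (F.ncard : ℤ)
      = ((s : ℤ) + 1) * ((s : ℤ) * ((s : ℤ) * t') + 1) := by
    exact_mod_cast hE3
  have hH4z : (C.ncard : ℤ) = ((θ₁ : ℤ) + 1) * (((s : ℤ) - 1) * ((s : ℤ) * t' + 1)) := by
    have h0 : (C.ncard : ℤ) = ((θ₁ : ℤ) + 1) * ((s₂ : ℤ) * ((s : ℤ) * t' + 1)) := by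
      exact_mod_cast hCcard
    have h1 : (s₂ : ℤ) = (s : ℤ) - 1 := by
      have : (s : ℤ) = (s₂ : ℤ) + 1 := by exact_mod_cast hs₂
      omega
    rw [h0, h1]
  have hstz : (θ₁ : ℤ) * (t' : ℤ) = (s : ℤ) := by exact_mod_cast hst
  -- the variance identity
  have hkey : ∑ u ∈ Ffin, ((k u : ℤ) - ((t' : ℤ) + 1)) ^ 2 = 0 := by
    have hterm : ∀ u ∈ Ffin, ((k u : ℤ) - ((t' : ℤ) + 1)) ^ 2
        = ((k u * (k u - 1) : ℕ) : ℤ)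
          + (1 - 2 * ((t' : ℤ) + 1)) * ((k u : ℕ) : ℤ) + ((t' : ℤ) + 1) ^ 2 := by
      intro u _
      rw [cast_mul_pred]
      ring
    rw [Finset.sum_congr rfl hterm, Finset.sum_add_distrib, Finset.sum_add_distrib,
      ← Finset.mul_sum, Finset.sum_const, nsmul_eq_mul]
    have hsb : ∑ u ∈ Ffin, ((k u * (k u - 1) : ℕ) : ℤ) = ({q : P × P × P | q.1 ∈ F ∧ (q.2.1 ∈ Ox ∧ q.2.2 ∈ Ox ∧ q.2.1 ≠ q.2.2) ∧ Collinear I q.1 q.2.1 ∧ Collinear I q.1 q.2.2}.ncard : ℤ) := by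
      rw [hb_sum, Nat.cast_sum]
    have hsa : ∑ u ∈ Ffin, ((k u : ℕ) : ℤ) = ({p : P × P | p.1 ∈ F ∧ p.2 ∈ Ox ∧ Collinear I p.1 p.2}.ncard : ℤ) := by
      rw [ha_sum, Nat.cast_sum]
    have hsn : ((Ffin.card : ℕ) : ℤ) = (F.ncard : ℤ) := by
      rw [hn5]
    rw [hsb, hsa, hsn]
    linear_combination hE2z + (1 - 2 * ((t' : ℤ) + 1)) * hE1z
      + ((t' : ℤ) + 1) ^ 2 * hE3z - (t' : ℤ) ^ 2 * hH4z
      + ((s : ℤ) * t' * (1 + t') * (1 - s)) * hstz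
  -- extract the value at x'
  have hx'mem : x' ∈ Ffin := (Set.Finite.mem_toFinset _).mpr hx'F
  have hzero := (Finset.sum_eq_zero_iff_of_nonneg
    (fun u _ => sq_nonneg ((k u : ℤ) - ((t' : ℤ) + 1)))).mp hkey x' hx'mem
  have hkx' : (k x' : ℤ) = (t' : ℤ) + 1 := by
    have := pow_eq_zero_iff (n := 2) (by norm_num) |>.mp hzero
    omega
  have hkx'n : k x' = t' + 1 := by exact_mod_cast hkx'
  -- conclude
  have hO1 : Ox ∩ subtendedOvoid I P' x' = {y | y ∈ Ox ∧ Collinear I x' y} := by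
    ext y
    simp only [Set.mem_inter_iff, Set.mem_setOf_eq]
    exact ⟨fun h => ⟨h.1, h.2.2⟩, fun h => ⟨h.1, hOxP' h.1, h.2⟩⟩
  have hdiv : s * t' / s = t' := Nat.mul_div_cancel_left t' hs0
  rw [hO1, hdiv]
  exact hkx'n

end GQpaper
end

section
/- Let S be a finite generalized quadrangle of order (s,t) with s ≥ 2, S' a proper full subquadrangle of order (s,t') with t = s·t' and every subtended ovoid of S' θ-subtended (θ > 1), let A be the geometry of points and lines of S not in S', E the geometry of subtended ovoids and rosettes of S', and let γ : A → E be a θ-cover. Then for every point x of S', all the lines of A whose image under γ is a rosette whose ovoids share the point x are, viewed as lines of S, incident with one common point x** of S'. -/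
namespace GQpaper

variable {P L : Type}

section Proof16

variable {P L : Type}

private lemma nonempty_of_ncard_succ {α : Type} {s : Set α} {n : ℕ} (h : s.ncard = n + 1) :
    s.Nonempty :=
  Set.nonempty_of_ncard_ne_zero (by omega)

/-- A line of `S` not in `L'` carries at most one point of `P'`. -/
private lemma no_two {I : P → L → Prop} {P' : Set P} {L' : Set L} {s t' : ℕ}
    (hGQ : IsGQ I) (hSubGQ : IsGQ (SubIncid I P' L'))
    (hSubOrd : HasOrder (SubIncid I P' L') s t')
    {l : L} (hl : l ∉ L') {x y : P} (hx : x ∈ P') (hy : y ∈ P')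
    (hxl : I x l) (hyl : I y l) : x = y := by
  by_contra hne
  by_cases hco : ∃ m : L, m ∈ L' ∧ I x m ∧ I y m
  · obtain ⟨m, hm, hxm, hym⟩ := hco
    have hlm : l = m := hGQ.1 x y hne l m hxl hyl hxm hym
    exact hl (hlm ▸ hm)
  · obtain ⟨m', hm'⟩ := nonempty_of_ncard_succ (hSubOrd.2 ⟨y, hy⟩)
    have hxm' : ¬ I x m'.1 := fun h => hco ⟨m'.1, m'.2, h, hm'⟩
    obtain ⟨⟨z, M⟩, ⟨hxM, hzM, hzm'⟩, _⟩ := hSubGQ.2 ⟨x, hx⟩ m' hxm'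
    obtain ⟨q, _, huniq⟩ := hGQ.2 x m'.1 hxm'
    have e1 := huniq (z.1, M.1) ⟨hxM, hzM, hzm'⟩
    have e2 := huniq (y, l) ⟨hxl, hyl, hm'⟩
    rw [← e2] at e1
    have hMl : M.1 = l := congrArg Prod.snd e1
    exact hl (hMl ▸ M.2)

/-- The unique point of `P'` on a line of `L'` collinear with a fixed external point. -/
private lemma trace_exu {I : P → L → Prop} {P' : Set P} {L' : Set L}
    (hGQ : IsGQ I) (hFull : IsFull I P' L')
    {y : P} (hy : y ∉ P') {m : L} (hm : m ∈ L') :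
    ∃! z : P, (z ∈ P' ∧ Collinear I y z) ∧ I z m := by
  have hym : ¬ I y m := fun h => hy (hFull m hm y h)
  obtain ⟨⟨z, N⟩, ⟨h1, h2, h3⟩, huniq⟩ := hGQ.2 y m hym
  refine ⟨z, ⟨⟨hFull m hm z h3, Or.inr ⟨N, h1, h2⟩⟩, h3⟩, ?_⟩
  rintro z' ⟨⟨hz'P, hcol⟩, hz'm⟩
  rcases hcol with rfl | ⟨N', hyN', hz'N'⟩
  · exact absurd hz'P hy
  · exact congrArg Prod.fst (huniq (z', N') ⟨hyN', hz'N', hz'm⟩)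

/-- An external line carries two distinct external points. -/
private lemma two_ext {I : P → L → Prop} {P' : Set P} {L' : Set L} {s t t' : ℕ}
    [Finite P]
    (hGQ : IsGQ I) (hOrd : HasOrder I s t) (hs : 2 ≤ s)
    (hSubGQ : IsGQ (SubIncid I P' L')) (hSubOrd : HasOrder (SubIncid I P' L') s t')
    {l : L} (hl : l ∉ L') :
    ∃ y₁ y₂ : P, y₁ ≠ y₂ ∧ (y₁ ∉ P' ∧ I y₁ l) ∧ (y₂ ∉ P' ∧ I y₂ l) := by
  have hA : {x : P | I x l}.ncard = s + 1 := hOrd.1 l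
  have hsub : ({x : P | I x l} ∩ P').ncard ≤ 1 := by
    rw [Set.ncard_le_one (Set.toFinite _)]
    rintro a ⟨hal, haP⟩ b ⟨hbl, hbP⟩
    exact no_two hGQ hSubGQ hSubOrd hl haP hbP hal hbl
  have hdiff : ({x : P | I x l} \ ({x : P | I x l} ∩ P')).ncard =
      {x : P | I x l}.ncard - ({x : P | I x l} ∩ P').ncard :=
    Set.ncard_diff Set.inter_subset_left (Set.toFinite _)
  have h2 : 1 < ({x : P | I x l} \ ({x : P | I x l} ∩ P')).ncard := by omega
  obtain ⟨a, ha, b, hb, hab⟩ := (Set.one_lt_ncard (Set.toFinite _)).mp h2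
  have ha' : I a l ∧ a ∉ P' := by
    obtain ⟨ha1, ha2⟩ := ha
    exact ⟨ha1, fun h => ha2 ⟨ha1, h⟩⟩
  have hb' : I b l ∧ b ∉ P' := by
    obtain ⟨hb1, hb2⟩ := hb
    exact ⟨hb1, fun h => hb2 ⟨hb1, h⟩⟩
  exact ⟨a, b, hab, ⟨ha'.2, ha'.1⟩, ⟨hb'.2, hb'.1⟩⟩

/-- Lower bound for the size of a subtended ovoid. -/
private lemma ovoid_lb {I : P → L → Prop} {P' : Set P} {L' : Set L} {s t t' : ℕ}
    [Finite P] [Finite L]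
    (hGQ : IsGQ I) (hOrd : HasOrder I s t)
    (hSubGQ : IsGQ (SubIncid I P' L')) (hSubOrd : HasOrder (SubIncid I P' L') s t')
    (hFull : IsFull I P' L')
    {y : P} (hy : y ∉ P') (hP' : P'.Nonempty) :
    s * t' + 1 ≤ (subtendedOvoid I P' y).ncard := by
  classical
  haveI : Fintype P := Fintype.ofFinite P
  haveI : Fintype L := Fintype.ofFinite L
  obtain ⟨x₀, hx₀⟩ := hP'
  obtain ⟨m₀s, hm₀s⟩ := nonempty_of_ncard_succ (hSubOrd.2 ⟨x₀, hx₀⟩)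
  have hm₀ : m₀s.1 ∈ L' := m₀s.2
  set m₀ : L := m₀s.1
  obtain ⟨c, ⟨⟨hcP, hcCol⟩, hcm₀⟩, hcu⟩ := trace_exu hGQ hFull hy hm₀
  have hcO : c ∈ subtendedOvoid I P' y := ⟨hcP, hcCol⟩
  have htr : ∀ n : L, n ∈ L' → ∃ z : P, (z ∈ P' ∧ Collinear I y z) ∧ I z n :=
    fun n hn => (trace_exu hGQ hFull hy hn).exists
  choose z hz using htr
  set f : P × L → P := fun p => if h : p.2 ∈ L' then z p.2 h else c with hf
  set WF : Finset P := Finset.univ.filter (fun w => I w m₀ ∧ w ≠ c) with hWF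
  set NF : P → Finset L := fun w => Finset.univ.filter (fun n => n ∈ L' ∧ n ≠ m₀ ∧ I w n) with hNF
  have hWFcard : WF.card = s := by
    have h1 : (WF : Set P) = {x : P | I x m₀} \ {c} := by
      ext w
      simp only [hWF, Finset.coe_filter, Finset.mem_univ, true_and, Set.mem_setOf_eq,
        Set.mem_diff, Set.mem_singleton_iff]
    have h2 := Set.ncard_diff_singleton_of_mem (show c ∈ {x : P | I x m₀} from hcm₀)
    rw [hOrd.1 m₀] at h2
    have h3 := Set.ncard_coe_finset WF
    rw [h1, h2] at h3
    omega
  have hNFcard : ∀ w ∈ WF, (NF w).card = t' := by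
    intro w hw
    rw [hWF, Finset.mem_filter] at hw
    obtain ⟨-, hwm₀, hwc⟩ := hw
    have hwP : w ∈ P' := hFull m₀ hm₀ w hwm₀
    have hcount : {n : L | n ∈ L' ∧ I w n}.ncard = t' + 1 := by
      have h3 := hSubOrd.2 ⟨w, hwP⟩
      have h4 : {n : L | n ∈ L' ∧ I w n} =
          Subtype.val '' {l : ↥L' | SubIncid I P' L' ⟨w, hwP⟩ l} := by
        ext n
        constructor
        · rintro ⟨hn, hwn⟩; exact ⟨⟨n, hn⟩, hwn, rfl⟩
        · rintro ⟨⟨n', hn'⟩, hwn, rfl⟩; exact ⟨hn', hwn⟩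
      rw [h4, Set.ncard_image_of_injective _ Subtype.val_injective, h3]
    have h5 : ((NF w : Finset L) : Set L) = {n : L | n ∈ L' ∧ I w n} \ {m₀} := by
      ext n
      simp only [hNF, Finset.coe_filter, Finset.mem_univ, true_and, Set.mem_setOf_eq,
        Set.mem_diff, Set.mem_singleton_iff]
      tauto
    have h6 := Set.ncard_diff_singleton_of_mem
      (show m₀ ∈ {n : L | n ∈ L' ∧ I w n} from ⟨hm₀, hwm₀⟩)
    rw [hcount] at h6
    have h7 := Set.ncard_coe_finset (NF w)
    rw [h5, h6] at h7
    omega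
  set PairsF : Finset (P × L) := WF.biUnion (fun w => (NF w).image (fun n => (w, n))) with hPF
  have hPFcard : PairsF.card = s * t' := by
    rw [hPF, Finset.card_biUnion]
    · have : ∀ w ∈ WF, ((NF w).image (fun n => (w, n))).card = t' := by
        intro w hw
        rw [Finset.card_image_of_injective _ (fun a b h => congrArg Prod.snd h)]
        exact hNFcard w hw
      rw [Finset.sum_congr rfl this, Finset.sum_const, hWFcard, smul_eq_mul]
    · intro w hw w' hw' hne
      rw [Function.onFun, Finset.disjoint_left]
      intro p hp hp'
      rw [Finset.mem_image] at hp hp'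
      obtain ⟨n, -, rfl⟩ := hp
      obtain ⟨n', -, he⟩ := hp'
      exact hne (congrArg Prod.fst he).symm
  have hpmem : ∀ p ∈ PairsF, I p.1 m₀ ∧ p.1 ≠ c ∧ p.2 ∈ L' ∧ p.2 ≠ m₀ ∧ I p.1 p.2 := by
    intro p hp
    rw [hPF, Finset.mem_biUnion] at hp
    obtain ⟨w, hw, hp⟩ := hp
    rw [Finset.mem_image] at hp
    obtain ⟨n, hn, rfl⟩ := hp
    rw [hWF, Finset.mem_filter] at hw
    rw [hNF, Finset.mem_filter] at hn
    exact ⟨hw.2.1, hw.2.2, hn.2.1, hn.2.2.1, hn.2.2.2⟩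
  have hmaps : ∀ p ∈ PairsF, f p ∈ (subtendedOvoid I P' y \ {c}) := by
    intro p hp
    obtain ⟨hm, hne, hL, hnm, hI⟩ := hpmem p hp
    rw [hf]
    simp only [dif_pos hL]
    obtain ⟨⟨hzP, hzCol⟩, hzn⟩ := hz p.2 hL
    refine ⟨⟨hzP, hzCol⟩, ?_⟩
    intro hzc
    rw [Set.mem_singleton_iff] at hzc
    apply hnm
    exact (hGQ.1 p.1 (z p.2 hL) (fun h => hne (h.trans hzc)) p.2 m₀ hI hzn
      hm (hzc ▸ hcm₀)).symm ▸ rfl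
  have hinj : Set.InjOn f ↑PairsF := by
    intro p hp p' hp' he
    rw [Finset.mem_coe] at hp hp'
    obtain ⟨hm, hne, hL, hnm, hI⟩ := hpmem p hp
    obtain ⟨hm', hne', hL', hnm', hI'⟩ := hpmem p' hp'
    have hd : f p = z p.2 hL := by rw [hf]; simp only [dif_pos hL]
    have hd' : f p' = z p'.2 hL' := by rw [hf]; simp only [dif_pos hL']
    have he2 : z p.2 hL = z p'.2 hL' := by rw [← hd, ← hd', he]
    obtain ⟨⟨hzP, hzCol⟩, hzn⟩ := hz p.2 hL
    obtain ⟨⟨hzP', hzCol'⟩, hzn'⟩ := hz p'.2 hL'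
    have hζc : z p.2 hL ≠ c := by
      have := hmaps p hp
      rw [hd] at this
      exact fun h => this.2 (Set.mem_singleton_iff.mpr h)
    have hζm₀ : ¬ I (z p.2 hL) m₀ := fun hIm => hζc (hcu _ ⟨⟨hzP, hzCol⟩, hIm⟩)
    obtain ⟨q, -, huq⟩ := hSubGQ.2 ⟨z p.2 hL, hzP⟩ ⟨m₀, hm₀⟩ hζm₀
    have e1 := huq (⟨p.1, hFull m₀ hm₀ p.1 hm⟩, ⟨p.2, hL⟩) ⟨hzn, hI, hm⟩
    have hzn'' : I (z p.2 hL) p'.2 := by rw [he2]; exact hzn'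
    have e2 := huq (⟨p'.1, hFull m₀ hm₀ p'.1 hm'⟩, ⟨p'.2, hL'⟩) ⟨hzn'', hI', hm'⟩
    rw [← e2] at e1
    have ef : p.1 = p'.1 := congrArg (fun r => (Prod.fst r).1) e1
    have es : p.2 = p'.2 := congrArg (fun r => (Prod.snd r).1) e1
    exact Prod.ext ef es
  have hmaps' : ∀ p ∈ PairsF, f p ∈ (subtendedOvoid I P' y \ {c}).toFinset := by
    intro p hp
    rw [Set.mem_toFinset]
    exact hmaps p hp
  have hcard := Finset.card_le_card_of_injOn f hmaps' hinj
  have h8 : (subtendedOvoid I P' y \ {c}).toFinset.card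
      = (subtendedOvoid I P' y \ {c}).ncard := (Set.ncard_eq_toFinset_card' _).symm
  have h9 : (subtendedOvoid I P' y \ {c}).ncard = (subtendedOvoid I P' y).ncard - 1 :=
    Set.ncard_diff_singleton_of_mem hcO
  have h10 : 0 < (subtendedOvoid I P' y).ncard := (Set.ncard_pos (Set.toFinite _)).mpr ⟨c, hcO⟩
  omega

/-- Every external line carries a (unique) point of `P'`. -/
private lemma base_exu {I : P → L → Prop} {P' : Set P} {L' : Set L} {s t t' : ℕ}
    [Finite P] [Finite L]
    (hGQ : IsGQ I) (hOrd : HasOrder I s t)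
    (hSubGQ : IsGQ (SubIncid I P' L')) (hSubOrd : HasOrder (SubIncid I P' L') s t')
    (hFull : IsFull I P' L') (htst : t = s * t')
    {l : L} (hl : l ∉ L') (hP' : P'.Nonempty) :
    ∃! cp : P, cp ∈ P' ∧ I cp l := by
  classical
  have hex : ∃ cp : P, cp ∈ P' ∧ I cp l := by
    by_contra hno
    push_neg at hno
    obtain ⟨y, hyl⟩ := nonempty_of_ncard_succ (hOrd.1 l)
    have hy : y ∉ P' := fun h => hno y h hyl
    have hlb := ovoid_lb hGQ hOrd hSubGQ hSubOrd hFull hy hP'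
    have hchoose : ∀ w : P, w ∈ subtendedOvoid I P' y → ∃ n : L, I y n ∧ I w n := by
      rintro w ⟨hwP, hcol⟩
      rcases hcol with rfl | ⟨n, h1, h2⟩
      · exact absurd hwP hy
      · exact ⟨n, h1, h2⟩
    choose g hg using hchoose
    set f : P → L := fun w => if h : w ∈ subtendedOvoid I P' y then g w h else l with hfdef
    have hmaps : ∀ w ∈ subtendedOvoid I P' y, f w ∈ {n : L | I y n} \ {l} := by
      intro w hw
      have hd : f w = g w hw := by rw [hfdef]; simp only [dif_pos hw]
      obtain ⟨h1, h2⟩ := hg w hw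
      rw [hd]
      refine ⟨h1, fun hgl => ?_⟩
      rw [Set.mem_singleton_iff] at hgl
      exact hno w hw.1 (hgl ▸ h2)
    have hinj : Set.InjOn f (subtendedOvoid I P' y) := by
      intro w hw w' hw' he
      have hd : f w = g w hw := by rw [hfdef]; simp only [dif_pos hw]
      have hd' : f w' = g w' hw' := by rw [hfdef]; simp only [dif_pos hw']
      obtain ⟨h1, h2⟩ := hg w hw
      obtain ⟨h1', h2'⟩ := hg w' hw'
      have hnL : g w hw ∉ L' := fun hmem => hy (hFull _ hmem y h1)
      have he2 : g w hw = g w' hw' := by rw [← hd, ← hd', he]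
      exact no_two hGQ hSubGQ hSubOrd hnL hw.1 hw'.1 h2 (he2 ▸ h2')
    have hle := Set.ncard_le_ncard_of_injOn f hmaps hinj (Set.toFinite _)
    have hdm : ({n : L | I y n} \ {l}).ncard = ({n : L | I y n}).ncard - 1 :=
      Set.ncard_diff_singleton_of_mem hyl
    rw [hOrd.2 y] at hdm
    rw [htst] at *
    omega
  obtain ⟨cp, hcp⟩ := hex
  exact ⟨cp, hcp, fun w hw => no_two hGQ hSubGQ hSubOrd hl hw.1 hcp.1 hw.2 hcp.2⟩

/-- No triangles in a GQ. -/
private lemma no_triangle {I : P → L → Prop} (hGQ : IsGQ I) {l : L} {w y₁ y₂ : P}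
    (hwl : ¬ I w l) (h1 : I y₁ l) (h2 : I y₂ l)
    (hw1 : w ≠ y₁) (hw2 : w ≠ y₂)
    (hc1 : Collinear I w y₁) (hc2 : Collinear I w y₂) : y₁ = y₂ := by
  rcases hc1 with h | ⟨N₁, ha1, hb1⟩
  · exact absurd h hw1
  rcases hc2 with h | ⟨N₂, ha2, hb2⟩
  · exact absurd h hw2
  obtain ⟨q, -, huniq⟩ := hGQ.2 w l hwl
  have e1 := huniq (y₁, N₁) ⟨ha1, hb1, h1⟩
  have e2 := huniq (y₂, N₂) ⟨ha2, hb2, h2⟩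
  rw [← e2] at e1
  exact congrArg Prod.fst e1

/-- A point lying in the subtended ovoids of two distinct points of a line lies on the line. -/
private lemma inter_on_line {I : P → L → Prop} {P' : Set P} (hGQ : IsGQ I)
    {l : L} {y₁ y₂ w : P} (hne : y₁ ≠ y₂) (hy₁ : y₁ ∉ P') (hy₂ : y₂ ∉ P')
    (hy₁l : I y₁ l) (hy₂l : I y₂ l)
    (hw1 : w ∈ subtendedOvoid I P' y₁) (hw2 : w ∈ subtendedOvoid I P' y₂) :
    w ∈ P' ∧ I w l := by
  obtain ⟨hwP, hcol1⟩ := hw1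
  obtain ⟨-, hcol2⟩ := hw2
  refine ⟨hwP, ?_⟩
  by_contra hwl
  have hs1 : Collinear I w y₁ := hcol1.elim (fun h => Or.inl h.symm)
    (fun ⟨n, a, b⟩ => Or.inr ⟨n, b, a⟩)
  have hs2 : Collinear I w y₂ := hcol2.elim (fun h => Or.inl h.symm)
    (fun ⟨n, a, b⟩ => Or.inr ⟨n, b, a⟩)
  exact hne (no_triangle hGQ hwl hy₁l hy₂l (fun h => hy₁ (h ▸ hwP)) (fun h => hy₂ (h ▸ hwP))
    hs1 hs2)

/-- The rosette of an external line has a unique common point. -/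
private lemma rosette_base_exu {I : P → L → Prop} {P' : Set P} {L' : Set L} {s t t' : ℕ}
    [Finite P] [Finite L]
    (hGQ : IsGQ I) (hOrd : HasOrder I s t) (hs : 2 ≤ s)
    (hSubGQ : IsGQ (SubIncid I P' L')) (hSubOrd : HasOrder (SubIncid I P' L') s t')
    (hFull : IsFull I P' L') (htst : t = s * t')
    {l : L} (hl : l ∉ L') (hP' : P'.Nonempty) :
    ∃! cp : P, ∀ O ∈ rosette I P' l, cp ∈ O := by
  obtain ⟨c, ⟨hcP, hcl⟩, hcu⟩ := base_exu hGQ hOrd hSubGQ hSubOrd hFull htst hl hP'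
  obtain ⟨y₁, y₂, hne, ⟨hy₁, hy₁l⟩, ⟨hy₂, hy₂l⟩⟩ := two_ext hGQ hOrd hs hSubGQ hSubOrd hl
  refine ⟨c, ?_, ?_⟩
  · rintro O ⟨u, hu, hul, rfl⟩
    exact ⟨hcP, Or.inr ⟨l, hul, hcl⟩⟩
  · intro w hw
    have hw1 := hw _ ⟨y₁, hy₁, hy₁l, rfl⟩
    have hw2 := hw _ ⟨y₂, hy₂, hy₂l, rfl⟩
    have hkey := inter_on_line hGQ hne hy₁ hy₂ hy₁l hy₂l hw1 hw2
    exact hcu w ⟨hkey.1, hkey.2⟩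

/-- Each line of `E` has a unique common point. -/
private lemma eline_base_exu {I : P → L → Prop} {P' : Set P} {L' : Set L} {s t t' : ℕ}
    [Finite P] [Finite L]
    (hGQ : IsGQ I) (hOrd : HasOrder I s t) (hs : 2 ≤ s)
    (hSubGQ : IsGQ (SubIncid I P' L')) (hSubOrd : HasOrder (SubIncid I P' L') s t')
    (hFull : IsFull I P' L') (htst : t = s * t')
    (hP' : P'.Nonempty) (R : ELine I P' L') :
    ∃! cp : P, ∀ O ∈ R.1, cp ∈ O := by
  obtain ⟨l, hl, hR⟩ := R.2
  rw [hR]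
  exact rosette_base_exu hGQ hOrd hs hSubGQ hSubOrd hFull htst hl hP'

/-- Through a point of `A` there is at most one line whose image under the cover is
based at a given point. -/
private lemma unique_line_through {I : P → L → Prop} {P' : Set P} {L' : Set L} {s t t' : ℕ}
    [Finite P] [Finite L]
    (hGQ : IsGQ I) (hOrd : HasOrder I s t) (hs : 2 ≤ s)
    (hSubGQ : IsGQ (SubIncid I P' L')) (hSubOrd : HasOrder (SubIncid I P' L') s t')
    (hFull : IsFull I P' L') (htst : t = s * t')
    {gp : APoint P' → EPoint I P'} {gl : ALine L' → ELine I P' L'}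
    (hcov : IsCover (AIncid I P' L') (EIncid I P' L') gp gl)
    (hP' : P'.Nonempty)
    {x : P} (y : APoint P') (V W : ALine L')
    (hyV : AIncid I P' L' y V) (hyW : AIncid I P' L' y W)
    (hV : ∀ O ∈ (gl V).1, x ∈ O) (hW : ∀ O ∈ (gl W).1, x ∈ O) : V = W := by
  classical
  have hmor := hcov.1
  have hexu : ∀ R : ELine I P' L', ∃! cp : P, ∀ O ∈ R.1, cp ∈ O :=
    fun R => eline_base_exu hGQ hOrd hs hSubGQ hSubOrd hFull htst hP' R
  set β : ELine I P' L' → P := fun R => (hexu R).choose with hβ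
  have hβspec : ∀ R : ELine I P' L', ∀ O ∈ R.1, β R ∈ O := fun R => (hexu R).choose_spec.1
  have hβuniq : ∀ (R : ELine I P' L') (w : P), (∀ O ∈ R.1, w ∈ O) → w = β R :=
    fun R w h => (hexu R).choose_spec.2 w h
  set Ry : Set (ELine I P' L') := {R | EIncid I P' L' (gp y) R} with hRy
  set ALy : Set (ALine L') := {V' | AIncid I P' L' y V'} with hALy
  have hALycard : ALy.ncard = t + 1 := by
    have himg : Subtype.val '' ALy = {n : L | I y.1 n} := by
      ext n
      constructor
      · rintro ⟨⟨n', hn'⟩, hn'2, rfl⟩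
        exact hn'2
      · intro hn
        have hnL : n ∉ L' := fun hmem => y.2 (hFull n hmem y.1 hn)
        exact ⟨⟨n, hnL⟩, hn, rfl⟩
    have h0 := Set.ncard_image_of_injective ALy (Subtype.val_injective)
    rw [himg, hOrd.2 y.1] at h0
    omega
  have hRyimg : gl '' ALy = Ry := by
    ext R
    constructor
    · rintro ⟨V', hV', rfl⟩
      exact hmor y V' hV'
    · intro hR
      obtain ⟨V', hV'⟩ := (hcov.2.1 y R hR).exists
      exact ⟨V', hV'.1, hV'.2⟩
  have hglinj : Set.InjOn gl ALy := by
    intro a ha b hb hab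
    obtain ⟨Vu, -, huniq⟩ := hcov.2.1 y (gl a) (hmor y a ha)
    rw [huniq a ⟨ha, rfl⟩, huniq b ⟨hb, hab.symm⟩]
  have hRycard : Ry.ncard = t + 1 := by
    rw [← hRyimg, Set.ncard_image_of_injOn hglinj, hALycard]
  obtain ⟨zsub, hzsub, hOz⟩ := (gp y).2
  have hOcard : t + 1 ≤ (gp y).1.ncard := by
    have := ovoid_lb hGQ hOrd hSubGQ hSubOrd hFull hzsub hP'
    rw [← hOz] at this
    omega
  have hmaps : ∀ R ∈ Ry, β R ∈ (gp y).1 := fun R hR => hβspec R (gp y).1 hR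
  have hsurj : ∀ w ∈ (gp y).1, ∃ R, ∃ hR : R ∈ Ry, β R = w := by
    intro w hw
    have hw' : w ∈ subtendedOvoid I P' zsub := hOz ▸ hw
    obtain ⟨hwP, hcol⟩ := hw'
    rcases hcol with h | ⟨M, hzM, hwM⟩
    · exact absurd (h ▸ hwP) hzsub
    · have hM : M ∉ L' := fun hmem => hzsub (hFull M hmem zsub hzM)
      refine ⟨⟨rosette I P' M, M, hM, rfl⟩, ?_, ?_⟩
      · show (gp y).1 ∈ rosette I P' M
        exact ⟨zsub, hzsub, hzM, hOz⟩
      · symm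
        apply hβuniq
        rintro O ⟨u, hu, huM, rfl⟩
        exact ⟨hwP, Or.inr ⟨M, huM, hwM⟩⟩
  have hinj : ∀ R₁ ∈ Ry, ∀ R₂ ∈ Ry, β R₁ = β R₂ → R₁ = R₂ := by
    intro R₁ h₁ R₂ h₂ he
    exact Set.inj_on_of_surj_on_of_ncard_le (s := Ry) (t := (gp y).1)
      (fun R _ => β R) (fun R hR => hmaps R hR) (fun w hw => hsurj w hw)
      (by rw [hRycard]; exact hOcard) h₁ h₂ he (Set.toFinite _)
  have h1 : gl V ∈ Ry := hmor y V hyV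
  have h2 : gl W ∈ Ry := hmor y W hyW
  have hbV : β (gl V) = x := (hβuniq (gl V) x hV).symm
  have hbW : β (gl W) = x := (hβuniq (gl W) x hW).symm
  have hglVW : gl V = gl W := hinj _ h1 _ h2 (by rw [hbV, hbW])
  obtain ⟨Vu, -, huniq⟩ := hcov.2.1 y (gl V) (hmor y V hyV)
  rw [huniq V ⟨hyV, rfl⟩, huniq W ⟨hyW, hglVW.symm⟩]

end Proof16


/-- for a θ-cover `γ : A → E` and every point `x` of `S'`, all the lines
of `A` whose γ-image is a rosette whose ovoids share `x` pass (in `S`) through one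
common point `x**` of `S'`. -/
theorem statement16 {P L : Type} [Finite P] [Finite L]
    (I : P → L → Prop) (P' : Set P) (L' : Set L) (s t t' θ : ℕ)
    (hGQ : IsGQ I) (hOrd : HasOrder I s t) (hs : 2 ≤ s)
    (hSubGQ : IsGQ (SubIncid I P' L'))
    (hSubOrd : HasOrder (SubIncid I P' L') s t')
    (hFull : IsFull I P' L')
    (hProper : P' ≠ Set.univ ∨ L' ≠ Set.univ)
    (htst : t = s * t') (hθsub : AllThetaSubtended I P' θ) (hθ : 1 < θ)
    (gp : APoint P' → EPoint I P') (gl : ALine L' → ELine I P' L')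
    (hcov : IsCover (AIncid I P' L') (EIncid I P' L') gp gl)
    (hfibp : ∀ O : EPoint I P', (gp ⁻¹' {O}).ncard = θ)
    (hfibl : ∀ R : ELine I P' L', (gl ⁻¹' {R}).ncard = θ) :
    ∀ x ∈ P', ∃ xs ∈ P', ∀ U : ALine L',
      (∀ O ∈ (gl U).1, x ∈ O) → I xs U.1 := by
  intro x hx
  classical
  have hP' : P'.Nonempty := ⟨x, hx⟩
  by_cases hT : ∃ U : ALine L', ∀ O ∈ (gl U).1, x ∈ O
  · obtain ⟨U₀, hU₀⟩ := hT
    obtain ⟨c₀, ⟨hc₀P, hc₀l⟩, hc₀u⟩ := base_exu hGQ hOrd hSubGQ hSubOrd hFull htst U₀.2 hP'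
    refine ⟨c₀, hc₀P, ?_⟩
    intro U hU
    by_cases hUeq : U = U₀
    · rw [hUeq]; exact hc₀l
    by_cases hcom : ∃ w : P, I w U₀.1 ∧ I w U.1
    · obtain ⟨w, hw₀, hwU⟩ := hcom
      by_cases hwP : w ∈ P'
      · have hwc : w = c₀ := hc₀u w ⟨hwP, hw₀⟩
        exact hwc ▸ hwU
      · exact absurd (unique_line_through hGQ hOrd hs hSubGQ hSubOrd hFull htst hcov hP'
          ⟨w, hwP⟩ U U₀ hwU hw₀ hU hU₀) hUeq
    · exfalso
      obtain ⟨c', ⟨hc'P, hc'U⟩, hc'u⟩ := base_exu hGQ hOrd hSubGQ hSubOrd hFull htst U.2 hP'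
      obtain ⟨y₁, y₂, hne, ⟨hy₁, hy₁l⟩, ⟨hy₂, hy₂l⟩⟩ := two_ext hGQ hOrd hs hSubGQ hSubOrd U₀.2
      have step : ∀ yy : P, yy ∉ P' → I yy U₀.1 → Collinear I c' yy := by
        intro yy hyyP hyyU₀
        have hyyU : ¬ I yy U.1 := fun h => hcom ⟨yy, hyyU₀, h⟩
        obtain ⟨⟨zz, NN⟩, ⟨h1, h2, h3⟩, -⟩ := hGQ.2 yy U.1 hyyU
        by_cases hzzP : zz ∈ P'
        · have hz : zz = c' := hc'u zz ⟨hzzP, h3⟩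
          exact hz ▸ (Or.inr ⟨NN, h2, h1⟩)
        · exfalso
          have hyz : yy ≠ zz := fun h => hcom ⟨yy, hyyU₀, h ▸ h3⟩
          have hNN : NN ∉ L' := fun hmem => hyyP (hFull NN hmem yy h1)
          have hYN : AIncid I P' L' ⟨yy, hyyP⟩ ⟨NN, hNN⟩ := h1
          have hZN : AIncid I P' L' ⟨zz, hzzP⟩ ⟨NN, hNN⟩ := h2
          have hgpYZ : gp ⟨yy, hyyP⟩ ≠ gp ⟨zz, hzzP⟩ := by
            intro he
            obtain ⟨a₀, -, huniq⟩ := hcov.2.2 ⟨NN, hNN⟩ (gp ⟨yy, hyyP⟩)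
              (hcov.1 ⟨yy, hyyP⟩ ⟨NN, hNN⟩ hYN)
            have e1 := huniq ⟨yy, hyyP⟩ ⟨hYN, rfl⟩
            have e2 := huniq ⟨zz, hzzP⟩ ⟨hZN, he.symm⟩
            rw [← e2] at e1
            exact hyz (congrArg Subtype.val e1)
          obtain ⟨l₀, hl₀, hRN⟩ := (gl ⟨NN, hNN⟩).2
          have hYmem : (gp ⟨yy, hyyP⟩).1 ∈ rosette I P' l₀ :=
            hRN ▸ (hcov.1 ⟨yy, hyyP⟩ ⟨NN, hNN⟩ hYN)
          have hZmem : (gp ⟨zz, hzzP⟩).1 ∈ rosette I P' l₀ :=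
            hRN ▸ (hcov.1 ⟨zz, hzzP⟩ ⟨NN, hNN⟩ hZN)
          obtain ⟨a, haP, hal₀, hOa⟩ := hYmem
          obtain ⟨b, hbP, hbl₀, hOb⟩ := hZmem
          have hab : a ≠ b := by
            intro he
            apply hgpYZ
            apply Subtype.ext
            rw [hOa, hOb, he]
          have hxY : x ∈ (gp ⟨yy, hyyP⟩).1 := hU₀ _ (hcov.1 ⟨yy, hyyP⟩ U₀ hyyU₀)
          have hxZ : x ∈ (gp ⟨zz, hzzP⟩).1 := hU _ (hcov.1 ⟨zz, hzzP⟩ U h3)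
          have hxl₀ : x ∈ P' ∧ I x l₀ :=
            inter_on_line hGQ hab haP hbP hal₀ hbl₀ (hOa ▸ hxY) (hOb ▸ hxZ)
          have hCondN : ∀ O ∈ (gl ⟨NN, hNN⟩).1, x ∈ O := by
            rw [hRN]
            rintro O ⟨u, hu, hul₀, rfl⟩
            exact ⟨hxl₀.1, Or.inr ⟨l₀, hul₀, hxl₀.2⟩⟩
          have hUN : U₀ = ⟨NN, hNN⟩ := unique_line_through hGQ hOrd hs hSubGQ hSubOrd hFull
            htst hcov hP' ⟨yy, hyyP⟩ U₀ ⟨NN, hNN⟩ hyyU₀ hYN hU₀ hCondN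
          exact hcom ⟨zz, (by rw [hUN]; exact h2), h3⟩
      have hc'U₀ : ¬ I c' U₀.1 := fun h => hcom ⟨c', h, hc'U⟩
      exact hne (no_triangle hGQ hc'U₀ hy₁l hy₂l (fun h => hy₁ (h ▸ hc'P))
        (fun h => hy₂ (h ▸ hc'P)) (step y₁ hy₁ hy₁l) (step y₂ hy₂ hy₂l))
  · exact ⟨x, hx, fun U hU => absurd ⟨U, hU⟩ hT⟩

end GQpaper
end
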